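/- arXiv:2604.09261 — 12 statements merged into one kernel-verified Lean document; each statement's English description precedes it below -/
import Mathlib

section
/- The function F is strictly monotone increasing on the positive reals: for all real numbers b₁, b₂ with 0 < b₁ < b₂, one has F(b₁) < F(b₂). -/
theorem aux_mono (c d : ℝ) (hc : 0 < c) (hd : 0 < d) :
    StrictMonoOn (fun b : ℝ => b * Real.log (1 + c / (d * b + c))) (Set.Ioi 0) := by
  apply strictMonoOn_of_deriv_pos (convex_Ioi 0)
  · apply ContinuousOn.mul continuousOn_id
    apply ContinuousOn.log
    · apply ContinuousOn.add continuousOn_const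
      apply ContinuousOn.div continuousOn_const
      · fun_prop
      · intro x hx
        have : (0:ℝ) < x := hx
        positivity
    · intro x hx
      have hx0 : (0:ℝ) < x := hx
      have ht : 0 < d * x + c := by positivity
      have : 0 < c / (d * x + c) := by positivity
      nlinarith
  · rw [interior_Ioi]
    intro b hb
    have hb0 : (0:ℝ) < b := hb
    have ht : 0 < d * b + c := by positivity
    have htne : d * b + c ≠ 0 := ne_of_gt ht
    have hupos : (0:ℝ) < 1 + c / (d * b + c) := by positivity
    have hune : 1 + c / (d * b + c) ≠ 0 := ne_of_gt hupos
    have h1 : HasDerivAt (fun b : ℝ => d * b + c) d b := by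
      simpa using ((hasDerivAt_id b).const_mul d).add_const c
    have h2 : HasDerivAt (fun b : ℝ => 1 + c / (d * b + c))
        ((0 * (d * b + c) - c * d) / (d * b + c) ^ 2) b :=
      ((hasDerivAt_const b c).div h1 htne).const_add 1
    have h3 : HasDerivAt (fun b : ℝ => Real.log (1 + c / (d * b + c)))
        ((0 * (d * b + c) - c * d) / (d * b + c) ^ 2 / (1 + c / (d * b + c))) b :=
      h2.log hune
    have h4 : HasDerivAt (fun b : ℝ => b * Real.log (1 + c / (d * b + c)))
        (1 * Real.log (1 + c / (d * b + c)) +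
          b * ((0 * (d * b + c) - c * d) / (d * b + c) ^ 2 / (1 + c / (d * b + c)))) b :=
      (hasDerivAt_id b).mul h3
    rw [h4.deriv]
    -- key log inequality : log u > 1 - 1/u for u > 1
    have hu1 : 1 < 1 + c / (d * b + c) := by
      have : 0 < c / (d * b + c) := by positivity
      linarith
    set u := 1 + c / (d * b + c) with hu
    have hlog : 1 - u⁻¹ < Real.log u := by
      have hz : Real.log u⁻¹ < u⁻¹ - 1 :=
        Real.log_lt_sub_one_of_pos (by positivity) (by
          intro hcon
          have : u = 1 := by
            field_simp at hcon
            linarith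
          linarith)
      rw [Real.log_inv] at hz
      linarith
    have huval : u = (d * b + 2 * c) / (d * b + c) := by
      rw [hu]; field_simp; ring
    have ht2 : 0 < d * b + 2 * c := by positivity
    have hinv : u⁻¹ = (d * b + c) / (d * b + 2 * c) := by
      rw [huval]; field_simp
    have h5 : b * ((c * d) / (d * b + c) ^ 2 / u) ≤ 1 - u⁻¹ := by
      have hL : b * ((c * d) / (d * b + c) ^ 2 / u)
          = b * c * d / ((d * b + c) * (d * b + 2 * c)) := by
        rw [huval]; field_simp
      have hR : 1 - u⁻¹ = c / (d * b + 2 * c) := by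
        rw [hinv]; field_simp; ring
      rw [hL, hR, div_le_div_iff₀ (by positivity) ht2]
      nlinarith [mul_pos (mul_pos hc hc) ht2]
    have : 1 * Real.log u + b * ((0 * (d * b + c) - c * d) / (d * b + c) ^ 2 / u)
        = Real.log u - b * ((c * d) / (d * b + c) ^ 2 / u) := by ring
    rw [this]
    linarith

/-- The function `F(b) = b * log₂(1 + h·p / (2·N₀·b + h·p))` is strictly
monotone increasing on the positive reals: for all `0 < b₁ < b₂`, `F b₁ < F b₂`. -/
theorem stmt_0 (h p N₀ : ℝ) (hh : 0 < h) (hp : 0 < p) (hN : 0 < N₀)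
    (F : ℝ → ℝ)
    (hF : ∀ b : ℝ, F b = b * Real.logb 2 (1 + h * p / (2 * N₀ * b + h * p)))
    (b₁ b₂ : ℝ) (hb₁ : 0 < b₁) (hb : b₁ < b₂) :
    F b₁ < F b₂ := by
  have hc : 0 < h * p := by positivity
  have hd : 0 < 2 * N₀ := by positivity
  have key := aux_mono (h * p) (2 * N₀) hc hd (Set.mem_Ioi.2 hb₁)
    (Set.mem_Ioi.2 (hb₁.trans hb)) hb
  rw [hF b₁, hF b₂]
  unfold Real.logb
  have hlog2 : (0:ℝ) < Real.log 2 := Real.log_pos (by norm_num)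
  simp only at key
  have e1 : b₁ * (Real.log (1 + h * p / (2 * N₀ * b₁ + h * p)) / Real.log 2)
      = (b₁ * Real.log (1 + h * p / (2 * N₀ * b₁ + h * p))) / Real.log 2 := by ring
  have e2 : b₂ * (Real.log (1 + h * p / (2 * N₀ * b₂ + h * p)) / Real.log 2)
      = (b₂ * Real.log (1 + h * p / (2 * N₀ * b₂ + h * p))) / Real.log 2 := by ring
  rw [e1, e2]
  exact div_lt_div_of_pos_right key hlog2
end

section
/- As b tends to +∞, F(b) tends to the finite limit h·p / (2·N₀·ln 2). -/
/-- As `b → +∞`, `F(b) = b * log₂(1 + h·p / (2·N₀·b + h·p))` tends to the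
finite limit `h·p / (2·N₀·ln 2)`. -/
theorem stmt_5 (h p N₀ : ℝ) (hh : 0 < h) (hp : 0 < p) (hN : 0 < N₀)
    (F : ℝ → ℝ)
    (hF : ∀ b : ℝ, F b = b * Real.logb 2 (1 + h * p / (2 * N₀ * b + h * p))) :
    Filter.Tendsto F Filter.atTop (nhds (h * p / (2 * N₀ * Real.log 2))) := by
  set c := h * p with hc
  have hc0 : 0 < c := mul_pos hh hp
  have hlog2 : Real.log 2 ≠ 0 := by
    have := Real.log_pos (by norm_num : (1:ℝ) < 2); linarith
  -- u(b) = 2N₀b + c tends to atTop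
  have hu : Filter.Tendsto (fun b : ℝ => 2 * N₀ * b + c) Filter.atTop Filter.atTop := by
    apply Filter.tendsto_atTop_add_const_right
    exact Filter.Tendsto.const_mul_atTop (by positivity) Filter.tendsto_id
  -- main limit: u * log(1 + c/u) → c
  have hT : Filter.Tendsto (fun b : ℝ =>
      (2 * N₀ * b + c) * Real.log (1 + c / (2 * N₀ * b + c)))
      Filter.atTop (nhds c) :=
    (Real.tendsto_mul_log_one_add_div_atTop c).comp hu
  -- log(1 + c/u) → 0
  have hL : Filter.Tendsto (fun b : ℝ =>
      Real.log (1 + c / (2 * N₀ * b + c))) Filter.atTop (nhds 0) := by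
    have h1 : Filter.Tendsto (fun b : ℝ => 1 + c / (2 * N₀ * b + c))
        Filter.atTop (nhds 1) := by
      have := Filter.Tendsto.div_atTop (tendsto_const_nhds (x := c)) hu
      simpa using (tendsto_const_nhds (x := (1:ℝ))).add this
    have hcont := (Real.continuousAt_log (by norm_num : (1:ℝ) ≠ 0)).tendsto
    simpa [Function.comp_def] using hcont.comp h1
  have hmain : Filter.Tendsto (fun b : ℝ =>
      ((2 * N₀ * b + c) * Real.log (1 + c / (2 * N₀ * b + c))
        - c * Real.log (1 + c / (2 * N₀ * b + c))) / (2 * N₀ * Real.log 2))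
      Filter.atTop (nhds ((c - c * 0) / (2 * N₀ * Real.log 2))) :=
    (hT.sub (hL.const_mul c)).div_const _
  have : F = fun b : ℝ =>
      ((2 * N₀ * b + c) * Real.log (1 + c / (2 * N₀ * b + c))
        - c * Real.log (1 + c / (2 * N₀ * b + c))) / (2 * N₀ * Real.log 2) := by
    funext b
    rw [hF b, Real.logb]
    generalize Real.log (1 + c / (2 * N₀ * b + c)) = L
    field_simp
    ring
  rw [this]
  simpa using hmain
end

section
/- For every b > 0, F(b) < h·p / (2·N₀·ln 2); that is, the value of F on the positive reals is strictly below its limit at infinity. -/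
/-- For every `b > 0`, `F(b) < h·p / (2·N₀·ln 2)`: the value of `F` on the
positive reals is strictly below its limit at infinity. -/
theorem stmt_6 (h p N₀ : ℝ) (hh : 0 < h) (hp : 0 < p) (hN : 0 < N₀)
    (F : ℝ → ℝ)
    (hF : ∀ b : ℝ, F b = b * Real.logb 2 (1 + h * p / (2 * N₀ * b + h * p)))
    (b : ℝ) (hb : 0 < b) :
    F b < h * p / (2 * N₀ * Real.log 2) := by
  have hlog2 : 0 < Real.log 2 := Real.log_pos (by norm_num)
  have hd : 0 < 2 * N₀ * b + h * p := by positivity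
  set u : ℝ := h * p / (2 * N₀ * b + h * p) with hu_def
  have hu : 0 < u := by positivity
  have h1 : Real.log (1 + u) < u := by
    have := Real.log_lt_sub_one_of_pos (by linarith : (0:ℝ) < 1 + u) (by linarith)
    linarith
  have key : b * Real.log (1 + u) < h * p / (2 * N₀) := by
    have h2 : b * Real.log (1 + u) < b * u := (mul_lt_mul_iff_right₀ hb).mpr h1
    have h3 : b * u < h * p / (2 * N₀) := by
      rw [hu_def, ← mul_div_assoc, div_lt_div_iff₀ hd (by positivity)]
      nlinarith [mul_pos (mul_pos hh hp) (mul_pos hh hp)]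
    linarith
  rw [hF]
  calc b * Real.logb 2 (1 + h * p / (2 * N₀ * b + h * p))
      = (b * Real.log (1 + u)) / Real.log 2 := by rw [Real.logb, hu_def]; ring
    _ < (h * p / (2 * N₀)) / Real.log 2 := by gcongr
    _ = h * p / (2 * N₀ * Real.log 2) := by rw [div_div]
end

section
/- For any real number c, the equation F(b) = c has exactly one solution b in the open interval (0, ∞) if and only if 0 < c < h·p / (2·N₀·ln 2). -/
open Real Filter Topology Set

lemma log_lower_aux {y : ℝ} (hy : 0 < y) : y / (1 + y) < Real.log (1 + y) := by
  have h1 : (0:ℝ) < 1 + y := by linarith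
  have h2 : Real.log (1 + y)⁻¹ < (1 + y)⁻¹ - 1 :=
    Real.log_lt_sub_one_of_pos (by positivity) (by
      intro hcon
      have : (1:ℝ) + y = 1 := by
        field_simp at hcon
        linarith
      linarith)
  rw [Real.log_inv] at h2
  have h3 : (1 + y)⁻¹ - 1 = -(y / (1 + y)) := by field_simp; ring
  rw [h3] at h2
  linarith

/-- For any real `c`, the equation `F(b) = c` has exactly one solution
`b ∈ (0, ∞)` if and only if `0 < c < h·p / (2·N₀·ln 2)`. -/
theorem stmt_7 (h p N₀ : ℝ) (hh : 0 < h) (hp : 0 < p) (hN : 0 < N₀)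
    (F : ℝ → ℝ)
    (hF : ∀ b : ℝ, F b = b * Real.logb 2 (1 + h * p / (2 * N₀ * b + h * p)))
    (c : ℝ) :
    (∃! b : ℝ, 0 < b ∧ F b = c) ↔ (0 < c ∧ c < h * p / (2 * N₀ * Real.log 2)) := by
  have hA0 : 0 < h * p := mul_pos hh hp
  set A := h * p with hAdef
  have hlog2 : (0:ℝ) < Real.log 2 := Real.log_pos (by norm_num)
  set L := A / (2 * N₀ * Real.log 2) with hLdef
  -- denominators positive
  have hden : ∀ b : ℝ, 0 ≤ b → 0 < 2 * N₀ * b + A := fun b hb => by positivity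
  -- the auxiliary function
  set G : ℝ → ℝ := fun b => b * (Real.log (2 * N₀ * b + 2 * A) - Real.log (2 * N₀ * b + A)) / Real.log 2 with hGdef
  have hFG : ∀ b : ℝ, 0 < b → F b = G b := by
    intro b hb
    have h1 : 0 < 2 * N₀ * b + A := hden b hb.le
    have h2 : 0 < 2 * N₀ * b + 2 * A := by linarith
    have harg : 1 + A / (2 * N₀ * b + A) = (2 * N₀ * b + 2 * A) / (2 * N₀ * b + A) := by
      field_simp; ring
    rw [hF, harg, Real.logb, Real.log_div (by positivity) (by positivity)]
    simp [hGdef]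
    ring
  -- derivative of G
  have hderiv : ∀ b : ℝ, 0 < b → HasDerivAt G
      (((Real.log (2 * N₀ * b + 2 * A) - Real.log (2 * N₀ * b + A)) +
        b * (2 * N₀ / (2 * N₀ * b + 2 * A) - 2 * N₀ / (2 * N₀ * b + A))) / Real.log 2) b := by
    intro b hb
    have h1 : 0 < 2 * N₀ * b + A := hden b hb.le
    have h2 : 0 < 2 * N₀ * b + 2 * A := by linarith
    have d1 : HasDerivAt (fun x : ℝ => 2 * N₀ * x + 2 * A) (2 * N₀) b := by
      simpa using ((hasDerivAt_id b).const_mul (2 * N₀)).add_const (2 * A)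
    have d2 : HasDerivAt (fun x : ℝ => 2 * N₀ * x + A) (2 * N₀) b := by
      simpa using ((hasDerivAt_id b).const_mul (2 * N₀)).add_const A
    have d3 := (d1.log h2.ne').sub (d2.log h1.ne')
    have d4 := (hasDerivAt_id b).mul d3
    have d5 := d4.div_const (Real.log 2)
    refine d5.congr_deriv ?_
    simp only [Pi.sub_apply, id_eq]
    ring
  -- derivative positive
  have hderivpos : ∀ b : ℝ, 0 < b →
      0 < ((Real.log (2 * N₀ * b + 2 * A) - Real.log (2 * N₀ * b + A)) +
        b * (2 * N₀ / (2 * N₀ * b + 2 * A) - 2 * N₀ / (2 * N₀ * b + A))) / Real.log 2 := by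
    intro b hb
    have h1 : 0 < 2 * N₀ * b + A := hden b hb.le
    have h2 : 0 < 2 * N₀ * b + 2 * A := by linarith
    set u := 2 * N₀ * b with hu
    have hu0 : 0 < u := by positivity
    have key : u * A / ((u + A) * (u + 2 * A)) < Real.log (u + 2 * A) - Real.log (u + A) := by
      have hy : 0 < A / (u + A) := by positivity
      have := log_lower_aux hy
      have e1 : 1 + A / (u + A) = (u + 2 * A) / (u + A) := by field_simp; ring
      have e2 : A / (u + A) / (1 + A / (u + A)) = A / (u + 2 * A) := by
        rw [e1]; field_simp
      rw [e2, e1, Real.log_div (by positivity) (by positivity)] at this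
      have e3 : u * A / ((u + A) * (u + 2 * A)) < A / (u + 2 * A) := by
        rw [div_lt_div_iff₀ (by positivity) (by positivity)]
        nlinarith [mul_pos (mul_pos hA0 hA0) h2]
      linarith
    have e4 : b * (2 * N₀ / (u + 2 * A) - 2 * N₀ / (u + A)) = -(u * A / ((u + A) * (u + 2 * A))) := by
      rw [hu]; field_simp; ring
    rw [e4]
    apply div_pos _ hlog2
    linarith
  -- strict monotonicity of F on Ioi 0
  have hmono : StrictMonoOn F (Ioi 0) := by
    have hGmono : StrictMonoOn G (Ioi 0) := by
      apply strictMonoOn_of_deriv_pos (convex_Ioi 0)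
      · intro x hx
        exact ((hderiv x hx).continuousAt).continuousWithinAt
      · intro x hx
        rw [interior_Ioi] at hx
        rw [(hderiv x hx).deriv]
        exact hderivpos x hx
    intro x hx y hy hxy
    rw [hFG x hx, hFG y hy]
    exact hGmono hx hy hxy
  -- F positive on Ioi 0
  have hFpos : ∀ b : ℝ, 0 < b → 0 < F b := by
    intro b hb
    rw [hF]
    apply mul_pos hb
    apply Real.logb_pos (by norm_num)
    have := hden b hb.le
    nlinarith [div_pos hA0 this]
  -- F tends to 0 from the right at 0
  have h0 : Tendsto F (𝓝[>] (0:ℝ)) (𝓝 0) := by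
    have hc : ContinuousAt (fun b : ℝ => b * Real.logb 2 (1 + A / (2 * N₀ * b + A))) 0 := by
      apply ContinuousAt.mul continuousAt_id
      have hinner : ContinuousAt (fun b : ℝ => 1 + A / (2 * N₀ * b + A)) 0 := by
        apply ContinuousAt.add continuousAt_const
        apply ContinuousAt.div continuousAt_const
        · fun_prop
        · simpa using hA0.ne'
      have hval : (1 + A / (2 * N₀ * (0:ℝ) + A)) = 2 := by
        rw [mul_zero, zero_add, div_self hA0.ne']
        norm_num
      have hlogc : ContinuousAt Real.log (1 + A / (2 * N₀ * (0:ℝ) + A)) := by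
        rw [hval]
        exact Real.continuousAt_log (by norm_num)
      have hcmp := ContinuousAt.comp (g := Real.log)
        (f := fun b : ℝ => 1 + A / (2 * N₀ * b + A)) hlogc hinner
      have := hcmp.div_const (Real.log 2)
      simp only [Real.logb]
      exact this
    have := hc.tendsto.mono_left (nhdsWithin_le_nhds (s := Ioi (0:ℝ)))
    simp only [zero_mul] at this
    have heq : ∀ b : ℝ, F b = (fun b : ℝ => b * Real.logb 2 (1 + A / (2 * N₀ * b + A))) b := hF
    rw [funext heq]
    exact this
  -- F tends to L at infinity
  have htop : Tendsto F atTop (𝓝 L) := by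
    have hdentop : Tendsto (fun b : ℝ => 2 * N₀ * b + A) atTop atTop := by
      apply Filter.tendsto_atTop_add_const_right
      exact (tendsto_id.const_mul_atTop (by positivity))
    have hy0 : Tendsto (fun b : ℝ => A / (2 * N₀ * b + A)) atTop (𝓝 0) :=
      tendsto_const_nhds.div_atTop hdentop
    have hyne : ∀ᶠ b in atTop, A / (2 * N₀ * b + A) ∈ ({0}ᶜ : Set ℝ) := by
      filter_upwards [eventually_ge_atTop (0:ℝ)] with b hb
      have := hden b hb
      simp only [Set.mem_compl_iff, Set.mem_singleton_iff]
      positivity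
    have hy : Tendsto (fun b : ℝ => A / (2 * N₀ * b + A)) atTop (𝓝[≠] 0) :=
      tendsto_nhdsWithin_iff.mpr ⟨hy0, hyne⟩
    have hslope : Tendsto (fun y : ℝ => Real.log (1 + y) / y) (𝓝[≠] (0:ℝ)) (𝓝 1) := by
      have hd : HasDerivAt (fun y : ℝ => Real.log (1 + y)) 1 0 := by
        have := (HasDerivAt.const_add 1 (hasDerivAt_id (0:ℝ))).log (by norm_num)
        simpa using this
      have := hasDerivAt_iff_tendsto_slope.mp hd
      apply this.congr'
      filter_upwards [self_mem_nhdsWithin] with y hy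
      simp only [Set.mem_compl_iff, Set.mem_singleton_iff] at hy
      simp [slope_fun_def, Real.log_one]
      ring
    have hby : Tendsto (fun b : ℝ => A * b / (2 * N₀ * b + A)) atTop (𝓝 (A / (2 * N₀))) := by
      have h1 : Tendsto (fun b : ℝ => A / (2 * N₀ + A / b)) atTop (𝓝 (A / (2 * N₀))) := by
        have h2 : Tendsto (fun b : ℝ => 2 * N₀ + A / b) atTop (𝓝 (2 * N₀)) := by
          have : Tendsto (fun b : ℝ => A / b) atTop (𝓝 0) :=
            tendsto_const_nhds.div_atTop tendsto_id
          simpa using tendsto_const_nhds.add this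
        exact tendsto_const_nhds.div h2 (by positivity)
      apply h1.congr'
      filter_upwards [eventually_gt_atTop (0:ℝ)] with b hb
      have h3 := hden b hb.le
      field_simp
    have hcomb : Tendsto (fun b : ℝ =>
        (Real.log (1 + A / (2 * N₀ * b + A)) / (A / (2 * N₀ * b + A))) *
          (A * b / (2 * N₀ * b + A)) / Real.log 2) atTop (𝓝 L) := by
      have hthis := ((hslope.comp hy).mul hby).div_const (Real.log 2)
      have hlim : (1 * (A / (2 * N₀))) / Real.log 2 = L := by
        rw [one_mul, div_div, hLdef]
      rw [hlim] at hthis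
      exact hthis
    apply hcomb.congr'
    filter_upwards [eventually_gt_atTop (0:ℝ)] with b hb
    have h1 : 0 < 2 * N₀ * b + A := hden b hb.le
    have hyb : 0 < A / (2 * N₀ * b + A) := by positivity
    rw [hF, Real.logb]
    field_simp
  -- F < L on Ioi 0
  have hFlt : ∀ b : ℝ, 0 < b → F b < L := by
    intro b hb
    have h1 : F b < F (b + 1) := hmono hb (mem_Ioi.mpr (by linarith)) (by linarith)
    have h2 : F (b + 1) ≤ L := by
      apply ge_of_tendsto htop
      filter_upwards [eventually_ge_atTop (b + 1)] with x hx
      rcases eq_or_lt_of_le hx with rfl | hlt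
      · exact le_rfl
      · exact (hmono (mem_Ioi.mpr (by linarith)) (mem_Ioi.mpr (by linarith)) hlt).le
    linarith
  constructor
  · rintro ⟨b, ⟨hb, hfb⟩, -⟩
    exact ⟨hfb ▸ hFpos b hb, hfb ▸ hFlt b hb⟩
  · rintro ⟨hc1, hc2⟩
    have ev1 : ∀ᶠ b in 𝓝[>] (0:ℝ), F b < c := h0.eventually_lt_const hc1
    obtain ⟨b₁, hb₁c, hb₁⟩ := (ev1.and self_mem_nhdsWithin).exists
    have ev2 : ∀ᶠ b in atTop, c < F b := htop.eventually_const_lt hc2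
    obtain ⟨b₂, hb₂c, hb₂⟩ := (ev2.and (eventually_gt_atTop b₁)).exists
    have hb₁0 : 0 < b₁ := hb₁
    have hsub : Icc b₁ b₂ ⊆ Ioi 0 := fun x hx => lt_of_lt_of_le hb₁0 hx.1
    have hcont : ContinuousOn F (Icc b₁ b₂) := by
      intro x hx
      exact ((hderiv x (hsub hx)).continuousAt.continuousWithinAt).congr
        (fun y hy => hFG y (hsub hy)) (hFG x (hsub hx))
    obtain ⟨b, hbmem, hbeq⟩ := intermediate_value_Icc hb₂.le hcont ⟨hb₁c.le, hb₂c.le⟩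
    refine ⟨b, ⟨hsub hbmem, hbeq⟩, ?_⟩
    rintro y ⟨hy, hfy⟩
    exact hmono.injOn hy (hsub hbmem) (by rw [hfy, hbeq])
end

section
/- The transmission-time function t(b) = Q / F(b) is strictly decreasing on the positive reals: for all 0 < b₁ < b₂, Q / F(b₁) > Q / F(b₂). -/
/-- Auxiliary: `log z > 1 - 1/z` for `z > 1`. -/
lemma aux_log_gt (z : ℝ) (hz : 1 < z) : 1 - z⁻¹ < Real.log z := by
  have hz0 : 0 < z := lt_trans one_pos hz
  have h1 : Real.log z⁻¹ < z⁻¹ - 1 :=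
    Real.log_lt_sub_one_of_pos (by positivity) (by
      intro hzz
      have : z = 1 := by field_simp at hzz; linarith
      linarith)
  rw [Real.log_inv] at h1
  linarith

/-- Auxiliary: positivity of the derivative numerator. -/
lemma aux_key (a c x : ℝ) (ha : 0 < a) (hc : 0 < c) (hx : 0 < x) :
    0 < (Real.log (a*x+2*c) - Real.log (a*x+c)) + x*(a/(a*x+2*c) - a/(a*x+c)) := by
  have hu : 0 < a*x+c := by nlinarith
  have hv : 0 < a*x+2*c := by nlinarith
  have huv : a*x+c < a*x+2*c := by linarith
  have hz : 1 < (a*x+2*c)/(a*x+c) := (one_lt_div hu).mpr huv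
  have hlog : 1 - ((a*x+2*c)/(a*x+c))⁻¹ < Real.log ((a*x+2*c)/(a*x+c)) := aux_log_gt _ hz
  have e3 : Real.log ((a*x+2*c)/(a*x+c)) = Real.log (a*x+2*c) - Real.log (a*x+c) :=
    Real.log_div hv.ne' hu.ne'
  have e4 : 1 - ((a*x+2*c)/(a*x+c))⁻¹ = c/(a*x+2*c) := by
    rw [inv_div]; field_simp; ring
  have e1 : x*(a/(a*x+2*c) - a/(a*x+c)) = -(a*x*c/((a*x+c)*(a*x+2*c))) := by
    field_simp; ring
  have e2 : a*x*c/((a*x+c)*(a*x+2*c)) < c/(a*x+2*c) := by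
    rw [div_lt_div_iff₀ (by positivity) hv]
    nlinarith [mul_pos (mul_pos ha hx) hc, mul_pos hc hv]
  rw [e1, ← e3]
  rw [e4] at hlog
  linarith

/-- The transmission-time function `t(b) = Q / F(b)` is strictly decreasing
on the positive reals: for all `0 < b₁ < b₂`, `Q / F(b₁) > Q / F(b₂)`. -/
theorem stmt_10 (h p N₀ Q : ℝ) (hh : 0 < h) (hp : 0 < p) (hN : 0 < N₀) (hQ : 0 < Q)
    (F : ℝ → ℝ)
    (hF : ∀ b : ℝ, F b = b * Real.logb 2 (1 + h * p / (2 * N₀ * b + h * p)))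
    (b₁ b₂ : ℝ) (hb₁ : 0 < b₁) (hb : b₁ < b₂) :
    Q / F b₁ > Q / F b₂ := by
  set a := 2 * N₀ with ha_def
  set c := h * p with hc_def
  have ha : 0 < a := by positivity
  have hc : 0 < c := by positivity
  have hlog2 : 0 < Real.log 2 := Real.log_pos one_lt_two
  set G : ℝ → ℝ := fun b => b * (Real.log (a*b+2*c) - Real.log (a*b+c)) / Real.log 2 with hG_def
  have hFG : ∀ b : ℝ, 0 ≤ b → F b = G b := by
    intro b hb0
    have h1 : 0 < a*b + c := by nlinarith
    have h2 : 0 < a*b + 2*c := by nlinarith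
    have e : 1 + c / (a * b + c) = (a*b+2*c)/(a*b+c) := by
      field_simp; ring
    rw [hF, e, Real.logb, Real.log_div h2.ne' h1.ne']
    simp [hG_def]
    ring
  have hasD : ∀ x : ℝ, 0 ≤ x → HasDerivAt G
      (((Real.log (a*x+2*c) - Real.log (a*x+c)) + x*(a/(a*x+2*c) - a/(a*x+c))) / Real.log 2) x := by
    intro x hx0
    have h1 : 0 < a*x + c := by nlinarith
    have h2 : 0 < a*x + 2*c := by nlinarith
    have l1 : HasDerivAt (fun b : ℝ => a*b+2*c) a x := by
      simpa using ((hasDerivAt_id x).const_mul a).add_const (2*c)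
    have l2 : HasDerivAt (fun b : ℝ => a*b+c) a x := by
      simpa using ((hasDerivAt_id x).const_mul a).add_const c
    have l3 : HasDerivAt (fun b : ℝ => Real.log (a*b+2*c)) (a/(a*x+2*c)) x := l1.log h2.ne'
    have l4 : HasDerivAt (fun b : ℝ => Real.log (a*b+c)) (a/(a*x+c)) x := l2.log h1.ne'
    have l5 := ((hasDerivAt_id x).mul (l3.sub l4)).div_const (Real.log 2)
    refine l5.congr_deriv ?_
    simp only [id_eq, Pi.sub_apply]
    ring
  have hmono : StrictMonoOn G (Set.Ici (0:ℝ)) := by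
    apply strictMonoOn_of_deriv_pos (convex_Ici 0)
    · exact fun x hx => (hasD x hx).continuousAt.continuousWithinAt
    · intro x hx
      rw [interior_Ici] at hx
      rw [(hasD x (le_of_lt hx)).deriv]
      exact div_pos (aux_key a c x ha hc hx) hlog2
  have hlt : F b₁ < F b₂ := by
    rw [hFG b₁ hb₁.le, hFG b₂ (hb₁.trans hb).le]
    exact hmono hb₁.le (hb₁.trans hb).le hb
  have hF1 : 0 < F b₁ := by
    rw [hFG b₁ hb₁.le, hG_def]
    have h1 : 0 < a*b₁ + c := by nlinarith
    have h2 : a*b₁ + c < a*b₁ + 2*c := by linarith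
    have hld : Real.log (a*b₁+c) < Real.log (a*b₁+2*c) := Real.log_lt_log h1 h2
    have : 0 < Real.log (a*b₁+2*c) - Real.log (a*b₁+c) := by linarith
    positivity
  exact div_lt_div_of_pos_left hQ hF1 hlt
end

section
/- The transmission-time function t(b) = Q / F(b) is strictly convex on the positive reals: for all b₁, b₂ > 0 with b₁ ≠ b₂ and every s ∈ (0,1), Q / F(s·b₁ + (1−s)·b₂) < s·(Q / F(b₁)) + (1−s)·(Q / F(b₂)). -/
open Real Set Filter

lemma aux_concave {A C : ℝ} (hA : 0 < A) (hC : 0 < C) :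
    StrictConcaveOn ℝ (Set.Ioi 0)
      (fun b : ℝ => b * (Real.log (A*b+2*C) - Real.log (A*b+C))) := by
  set g : ℝ → ℝ := fun b => b * (Real.log (A*b+2*C) - Real.log (A*b+C)) with hg
  set g1 : ℝ → ℝ := fun b => (Real.log (A*b+2*C) - Real.log (A*b+C))
      + b * (A/(A*b+2*C) - A/(A*b+C)) with hg1
  set g2 : ℝ → ℝ := fun b => 2 * (A/(A*b+2*C) - A/(A*b+C))
      + b * (A^2/(A*b+C)^2 - A^2/(A*b+2*C)^2) with hg2
  have hv : ∀ x : ℝ, x ∈ Set.Ioi (0:ℝ) → 0 < A*x+C ∧ 0 < A*x+2*C := by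
    intro x hx
    constructor <;> nlinarith [hx.out]
  have hlin : ∀ (c : ℝ) (x : ℝ), HasDerivAt (fun b : ℝ => A*b+c) A x := by
    intro c x
    simpa using ((hasDerivAt_id x).const_mul A).add_const c
  have hd1 : ∀ x ∈ Set.Ioi (0:ℝ), HasDerivAt g (g1 x) x := by
    intro x hx
    obtain ⟨hu, hw⟩ := hv x hx
    have h1 : HasDerivAt (fun b : ℝ => Real.log (A*b+2*C)) (A/(A*x+2*C)) x := by
      simpa [div_eq_mul_inv, mul_comm, Function.comp_def] using
        (Real.hasDerivAt_log hw.ne').comp x (hlin (2*C) x)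
    have h2 : HasDerivAt (fun b : ℝ => Real.log (A*b+C)) (A/(A*x+C)) x := by
      simpa [div_eq_mul_inv, mul_comm, Function.comp_def] using
        (Real.hasDerivAt_log hu.ne').comp x (hlin C x)
    have := (hasDerivAt_id' x).mul (h1.sub h2)
    exact this.congr_deriv (by simp only [hg1, Pi.sub_apply]; ring)
  have hd2 : ∀ x ∈ Set.Ioi (0:ℝ), HasDerivAt g1 (g2 x) x := by
    intro x hx
    obtain ⟨hu, hw⟩ := hv x hx
    have h1 : HasDerivAt (fun b : ℝ => Real.log (A*b+2*C)) (A/(A*x+2*C)) x := by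
      simpa [div_eq_mul_inv, mul_comm, Function.comp_def] using
        (Real.hasDerivAt_log hw.ne').comp x (hlin (2*C) x)
    have h2 : HasDerivAt (fun b : ℝ => Real.log (A*b+C)) (A/(A*x+C)) x := by
      simpa [div_eq_mul_inv, mul_comm, Function.comp_def] using
        (Real.hasDerivAt_log hu.ne').comp x (hlin C x)
    have h3 : HasDerivAt (fun b : ℝ => A/(A*b+2*C)) (-(A^2/(A*x+2*C)^2)) x := by
      have := (hasDerivAt_const x A).div (hlin (2*C) x) hw.ne'
      refine this.congr_deriv ?_
      ring
    have h4 : HasDerivAt (fun b : ℝ => A/(A*b+C)) (-(A^2/(A*x+C)^2)) x := by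
      have := (hasDerivAt_const x A).div (hlin C x) hu.ne'
      refine this.congr_deriv ?_
      ring
    have := ((h1.sub h2).add ((hasDerivAt_id' x).mul (h3.sub h4)))
    refine this.congr_deriv ?_
    simp only [hg2, Pi.sub_apply]
    have e1 : A^2/(A*x+C)^2 - A^2/(A*x+2*C)^2
        = (-(A^2/(A*x+2*C)^2)) - (-(A^2/(A*x+C)^2)) := by ring
    ring
  have hopen : IsOpen (Set.Ioi (0:ℝ)) := isOpen_Ioi
  have hderiv1 : ∀ x ∈ Set.Ioi (0:ℝ), deriv g x = g1 x := fun x hx => (hd1 x hx).deriv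
  apply strictConcaveOn_of_deriv2_neg (convex_Ioi 0)
  · exact fun x hx => ((hd1 x hx).continuousAt).continuousWithinAt
  · intro x hx
    rw [interior_Ioi] at hx
    obtain ⟨hu, hw⟩ := hv x hx
    have heq : deriv g =ᶠ[nhds x] g1 :=
      Filter.eventuallyEq_of_mem (hopen.mem_nhds hx) hderiv1
    have hder : deriv (deriv g) x = g2 x := by
      rw [heq.deriv_eq]
      exact (hd2 x hx).deriv
    simp only [Function.iterate_succ, Function.iterate_zero, Function.comp_apply, id_eq]
    rw [hder]
    -- show g2 x < 0
    have hx0 : 0 < x := hx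
    have key : g2 x * ((A*x+C)^2 * (A*x+2*C)^2) = -(3*A^2*C^2*x + 4*A*C^3) := by
      simp only [hg2]
      field_simp
      ring
    have hP : 0 < (A*x+C)^2 * (A*x+2*C)^2 := by positivity
    have hE : 0 < 3*A^2*C^2*x + 4*A*C^3 := by positivity
    nlinarith [key, hP, hE]

/-- The transmission-time function `t(b) = Q / F(b)` is strictly convex on
the positive reals: for all `b₁, b₂ > 0` with `b₁ ≠ b₂` and every `s ∈ (0,1)`,
`Q / F(s·b₁ + (1−s)·b₂) < s·(Q / F(b₁)) + (1−s)·(Q / F(b₂))`. -/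
theorem stmt_11 (h p N₀ Q : ℝ) (hh : 0 < h) (hp : 0 < p) (hN : 0 < N₀) (hQ : 0 < Q)
    (F : ℝ → ℝ)
    (hF : ∀ b : ℝ, F b = b * Real.logb 2 (1 + h * p / (2 * N₀ * b + h * p)))
    (b₁ b₂ : ℝ) (hb₁ : 0 < b₁) (hb₂ : 0 < b₂) (hne : b₁ ≠ b₂)
    (s : ℝ) (hs0 : 0 < s) (hs1 : s < 1) :
    Q / F (s * b₁ + (1 - s) * b₂) < s * (Q / F b₁) + (1 - s) * (Q / F b₂) := by
  set A := 2 * N₀ with hA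
  set C := h * p with hC
  have hA0 : 0 < A := by positivity
  have hC0 : 0 < C := by positivity
  set g : ℝ → ℝ := fun b => b * (Real.log (A*b+2*C) - Real.log (A*b+C)) with hg
  have hs1' : 0 < 1 - s := by linarith
  -- F b = g b / log 2 for b > 0
  have hFg : ∀ b : ℝ, 0 < b → F b = g b / Real.log 2 := by
    intro b hb
    have hu : 0 < A*b+C := by positivity
    have hw : 0 < A*b+2*C := by positivity
    have harg : 1 + h * p / (2 * N₀ * b + h * p) = (A*b+2*C)/(A*b+C) := by
      rw [← hA, ← hC] at *
      field_simp
      ring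
    rw [hF b, harg, Real.logb, Real.log_div hw.ne' hu.ne']
    simp [hg]
    ring
  -- F positive on positives
  have hFpos : ∀ b : ℝ, 0 < b → 0 < F b := by
    intro b hb
    have hfrac : 0 < C / (A*b+C) := by positivity
    have hlogb : 0 < Real.logb 2 (1 + C/(A*b+C)) :=
      Real.logb_pos (by norm_num) (by linarith)
    rw [hF b]
    exact mul_pos hb hlogb
  set x := s * b₁ + (1 - s) * b₂ with hx
  have hxpos : 0 < x := by nlinarith
  -- strict concavity of g
  have hconc := aux_concave hA0 hC0
  have hkey : s * g b₁ + (1 - s) * g b₂ < g x := by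
    have := hconc.2 (Set.mem_Ioi.mpr hb₁) (Set.mem_Ioi.mpr hb₂) hne hs0 hs1' (by ring)
    simpa [hx, smul_eq_mul] using this
  -- transfer to F
  have hlog2 : 0 < Real.log 2 := Real.log_pos (by norm_num)
  have hFkey : s * F b₁ + (1 - s) * F b₂ < F x := by
    rw [hFg b₁ hb₁, hFg b₂ hb₂, hFg x hxpos]
    have h' : (s * g b₁ + (1 - s) * g b₂) / Real.log 2 < g x / Real.log 2 :=
      (div_lt_div_iff_of_pos_right hlog2).mpr hkey
    have e : s * (g b₁ / Real.log 2) + (1 - s) * (g b₂ / Real.log 2)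
        = (s * g b₁ + (1 - s) * g b₂) / Real.log 2 := by ring
    rw [e]; exact h'
  have hF1 : 0 < F b₁ := hFpos b₁ hb₁
  have hF2 : 0 < F b₂ := hFpos b₂ hb₂
  have hFx : 0 < F x := hFpos x hxpos
  have havg : 0 < s * F b₁ + (1 - s) * F b₂ := by nlinarith
  have h1 : Q / F x < Q / (s * F b₁ + (1 - s) * F b₂) :=
    div_lt_div_of_pos_left hQ havg hFkey
  have h2 : Q / (s * F b₁ + (1 - s) * F b₂) ≤ s * (Q / F b₁) + (1 - s) * (Q / F b₂) := by
    have expand : s * (Q / F b₁) + (1 - s) * (Q / F b₂) - Q / (s * F b₁ + (1 - s) * F b₂)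
        = Q * s * (1 - s) * (F b₁ - F b₂)^2 / (F b₁ * F b₂ * (s * F b₁ + (1 - s) * F b₂)) := by
      field_simp
      ring
    have hnum : 0 ≤ Q * s * (1 - s) * (F b₁ - F b₂)^2 :=
      mul_nonneg (mul_nonneg (mul_nonneg hQ.le hs0.le) hs1'.le) (sq_nonneg _)
    have hden : 0 < F b₁ * F b₂ * (s * F b₁ + (1 - s) * F b₂) :=
      mul_pos (mul_pos hF1 hF2) havg
    have := div_nonneg hnum hden.le
    linarith
  linarith
end

section
/- The pairwise transmission-time function ξ(b) = max(Q / F_i(b), Q / F_j(b)) is convex and strictly decreasing on the positive reals: for all 0 < b₁ < b₂, ξ(b₁) > ξ(b₂), and for all b₁, b₂ > 0 and s ∈ [0,1], ξ(s·b₁ + (1−s)·b₂) ≤ s·ξ(b₁) + (1−s)·ξ(b₂). -/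
open Set

private noncomputable def auxG (a c b : ℝ) : ℝ :=
  b * (Real.log (a*b+2*c) - Real.log (a*b+c)) / Real.log 2

private noncomputable def auxG' (a c b : ℝ) : ℝ :=
  ((Real.log (a*b+2*c) - Real.log (a*b+c)) + b*(a/(a*b+2*c) - a/(a*b+c))) / Real.log 2

private noncomputable def auxG'' (a c b : ℝ) : ℝ :=
  (2*(a/(a*b+2*c) - a/(a*b+c)) + b*(a^2/((a*b+c)^2) - a^2/((a*b+2*c)^2))) / Real.log 2

private lemma aux_eq {a c : ℝ} (ha : 0 < a) (hc : 0 < c) {b : ℝ} (hb : 0 < b) :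
    b * Real.logb 2 (1 + c / (a*b+c)) = auxG a c b := by
  have h1 : 0 < a*b+c := by positivity
  have h2 : 0 < a*b+2*c := by positivity
  have : 1 + c / (a*b+c) = (a*b+2*c)/(a*b+c) := by field_simp; ring
  rw [this, auxG, Real.logb, Real.log_div h2.ne' h1.ne']
  ring

private lemma aux_hderiv1 {a c : ℝ} (ha : 0 < a) (hc : 0 < c) {b : ℝ} (hb : 0 < b) :
    HasDerivAt (auxG a c) (auxG' a c b) b := by
  have h1 : (0:ℝ) < a*b+c := by positivity
  have h2 : (0:ℝ) < a*b+2*c := by positivity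
  have hl : HasDerivAt (fun b => a*b+2*c) a b := by
    simpa using ((hasDerivAt_id b).const_mul a).add_const (2*c)
  have hl2 : HasDerivAt (fun b => a*b+c) a b := by
    simpa using ((hasDerivAt_id b).const_mul a).add_const c
  have hL : HasDerivAt (fun b => Real.log (a*b+2*c) - Real.log (a*b+c))
      (a/(a*b+2*c) - a/(a*b+c)) b := (hl.log h2.ne').sub (hl2.log h1.ne')
  have := ((hasDerivAt_id b).mul hL).div_const (Real.log 2)
  refine this.congr_deriv ?_
  simp only [auxG', id_eq]
  ring

private lemma aux_hderiv2 {a c : ℝ} (ha : 0 < a) (hc : 0 < c) {b : ℝ} (hb : 0 < b) :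
    HasDerivAt (auxG' a c) (auxG'' a c b) b := by
  have h1 : (0:ℝ) < a*b+c := by positivity
  have h2 : (0:ℝ) < a*b+2*c := by positivity
  have hl : HasDerivAt (fun b => a*b+2*c) a b := by
    simpa using ((hasDerivAt_id b).const_mul a).add_const (2*c)
  have hl2 : HasDerivAt (fun b => a*b+c) a b := by
    simpa using ((hasDerivAt_id b).const_mul a).add_const c
  have hL : HasDerivAt (fun b => Real.log (a*b+2*c) - Real.log (a*b+c))
      (a/(a*b+2*c) - a/(a*b+c)) b := (hl.log h2.ne').sub (hl2.log h1.ne')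
  have hq1 : HasDerivAt (fun b => a/(a*b+2*c)) (-(a*a)/((a*b+2*c)^2)) b := by
    have := (hasDerivAt_const b a).div hl h2.ne'
    refine this.congr_deriv ?_
    field_simp
    ring
  have hq2 : HasDerivAt (fun b => a/(a*b+c)) (-(a*a)/((a*b+c)^2)) b := by
    have := (hasDerivAt_const b a).div hl2 h1.ne'
    refine this.congr_deriv ?_
    field_simp
    ring
  have := (hL.add ((hasDerivAt_id b).mul (hq1.sub hq2))).div_const (Real.log 2)
  refine this.congr_deriv ?_
  simp only [auxG'', id_eq, Pi.sub_apply]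
  ring

private lemma aux_deriv1_pos {a c : ℝ} (ha : 0 < a) (hc : 0 < c) {b : ℝ} (hb : 0 < b) :
    0 < auxG' a c b := by
  have h1 : (0:ℝ) < a*b+c := by positivity
  have h2 : (0:ℝ) < a*b+2*c := by positivity
  have hlog2 : (0:ℝ) < Real.log 2 := Real.log_pos (by norm_num)
  have hlb : 1 - (a*b+c)/(a*b+2*c) ≤ Real.log ((a*b+2*c)/(a*b+c)) := by
    have h := Real.log_le_sub_one_of_pos (x := (a*b+c)/(a*b+2*c)) (by positivity)
    have hrw : Real.log ((a*b+c)/(a*b+2*c)) = - Real.log ((a*b+2*c)/(a*b+c)) := by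
      rw [Real.log_div h1.ne' h2.ne', Real.log_div h2.ne' h1.ne']; ring
    rw [hrw] at h
    linarith
  have hsplit : Real.log (a*b+2*c) - Real.log (a*b+c) = Real.log ((a*b+2*c)/(a*b+c)) :=
    (Real.log_div h2.ne' h1.ne').symm
  have key : 1 - (a*b+c)/(a*b+2*c) + b*(a/(a*b+2*c) - a/(a*b+c))
      = c^2 / ((a*b+2*c)*(a*b+c)) := by
    field_simp
    ring
  have hpos : 0 < c^2 / ((a*b+2*c)*(a*b+c)) := by positivity
  apply div_pos _ hlog2
  rw [hsplit]
  nlinarith [hlb, key, hpos]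

private lemma aux_deriv2_nonpos {a c : ℝ} (ha : 0 < a) (hc : 0 < c) {b : ℝ} (hb : 0 < b) :
    auxG'' a c b ≤ 0 := by
  have h1 : (0:ℝ) < a*b+c := by positivity
  have h2 : (0:ℝ) < a*b+2*c := by positivity
  have hlog2 : (0:ℝ) < Real.log 2 := Real.log_pos (by norm_num)
  have key : 2*(a/(a*b+2*c) - a/(a*b+c)) + b*(a^2/((a*b+c)^2) - a^2/((a*b+2*c)^2))
      = -(a*(3*a*b*c^2 + 4*c^3)) / ((a*b+2*c)^2*(a*b+c)^2) := by
    field_simp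
    ring
  rw [auxG'', key]
  apply div_nonpos_of_nonpos_of_nonneg _ hlog2.le
  apply div_nonpos_of_nonpos_of_nonneg _ (by positivity)
  have : 0 ≤ a*(3*a*b*c^2 + 4*c^3) := by positivity
  linarith

private lemma aux_pos {a c : ℝ} (ha : 0 < a) (hc : 0 < c) {b : ℝ} (hb : 0 < b) :
    0 < auxG a c b := by
  have h1 : (0:ℝ) < a*b+c := by positivity
  have hlt : Real.log (a*b+c) < Real.log (a*b+2*c) := Real.log_lt_log h1 (by linarith)
  have hlog2 : (0:ℝ) < Real.log 2 := Real.log_pos (by norm_num)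
  unfold auxG
  apply div_pos _ hlog2
  exact mul_pos hb (by linarith)

private lemma aux_mono_s12 {a c : ℝ} (ha : 0 < a) (hc : 0 < c) :
    StrictMonoOn (auxG a c) (Ioi 0) := by
  apply strictMonoOn_of_deriv_pos (convex_Ioi 0)
  · exact fun x hx => (aux_hderiv1 ha hc hx).continuousAt.continuousWithinAt
  · intro x hx
    rw [interior_Ioi] at hx
    rw [(aux_hderiv1 ha hc hx).deriv]
    exact aux_deriv1_pos ha hc hx

private lemma aux_concave_s12 {a c : ℝ} (ha : 0 < a) (hc : 0 < c) :
    ConcaveOn ℝ (Ioi 0) (auxG a c) := by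
  apply concaveOn_of_hasDerivWithinAt2_nonpos (convex_Ioi 0)
    (f' := auxG' a c) (f'' := auxG'' a c)
  · exact fun x hx => (aux_hderiv1 ha hc hx).continuousAt.continuousWithinAt
  · intro x hx
    rw [interior_Ioi] at hx ⊢
    exact (aux_hderiv1 ha hc hx).hasDerivWithinAt
  · intro x hx
    rw [interior_Ioi] at hx ⊢
    exact (aux_hderiv2 ha hc hx).hasDerivWithinAt
  · intro x hx
    rw [interior_Ioi] at hx
    exact aux_deriv2_nonpos ha hc hx

private lemma aux_invcomb {Q u v s : ℝ} (hQ : 0 < Q) (hu : 0 < u) (hv : 0 < v)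
    (hs : 0 ≤ s) (hs1 : s ≤ 1) :
    Q / (s*u + (1-s)*v) ≤ s * (Q/u) + (1-s) * (Q/v) := by
  have hw : 0 < s*u + (1-s)*v := by rcases le_total u v with h | h <;> nlinarith
  rw [div_le_iff₀ hw]
  have key : (s*(Q/u)+(1-s)*(Q/v)) * (s*u+(1-s)*v) - Q
      = Q * (s*(1-s)*(u-v)^2) / (u*v) := by
    field_simp
    ring
  have hnn : 0 ≤ Q * (s*(1-s)*(u-v)^2) / (u*v) := by
    apply div_nonneg _ (by positivity)
    apply mul_nonneg hQ.le
    apply mul_nonneg (by nlinarith) (sq_nonneg _)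
  linarith

/-- The pairwise transmission-time function
`ξ(b) = max(Q / F_i(b), Q / F_j(b))` is convex and strictly decreasing on the positive
reals: for all `0 < b₁ < b₂`, `ξ(b₁) > ξ(b₂)`, and for all `b₁, b₂ > 0` and `s ∈ [0,1]`,
`ξ(s·b₁ + (1−s)·b₂) ≤ s·ξ(b₁) + (1−s)·ξ(b₂)`. -/
theorem stmt_12 (p N₀ Q hi hj : ℝ) (hp : 0 < p) (hN : 0 < N₀) (hQ : 0 < Q)
    (hhi : 0 < hi) (hhj : 0 < hj)
    (Fi Fj ξ : ℝ → ℝ)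
    (hFi : ∀ b : ℝ, Fi b = b * Real.logb 2 (1 + hi * p / (2 * N₀ * b + hi * p)))
    (hFj : ∀ b : ℝ, Fj b = b * Real.logb 2 (1 + hj * p / (2 * N₀ * b + hj * p)))
    (hξ : ∀ b : ℝ, ξ b = max (Q / Fi b) (Q / Fj b)) :
    (∀ b₁ b₂ : ℝ, 0 < b₁ → b₁ < b₂ → ξ b₁ > ξ b₂) ∧
    (∀ b₁ b₂ : ℝ, 0 < b₁ → 0 < b₂ → ∀ s : ℝ, 0 ≤ s → s ≤ 1 →
      ξ (s * b₁ + (1 - s) * b₂) ≤ s * ξ b₁ + (1 - s) * ξ b₂) := by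
  have ha : (0:ℝ) < 2 * N₀ := by linarith
  have hci : 0 < hi * p := mul_pos hhi hp
  have hcj : 0 < hj * p := mul_pos hhj hp
  have hFi' : ∀ b : ℝ, 0 < b → Fi b = auxG (2*N₀) (hi*p) b := by
    intro b hb; rw [hFi b, ← aux_eq ha hci hb]
  have hFj' : ∀ b : ℝ, 0 < b → Fj b = auxG (2*N₀) (hj*p) b := by
    intro b hb; rw [hFj b, ← aux_eq ha hcj hb]
  have hFipos : ∀ b : ℝ, 0 < b → 0 < Fi b := fun b hb => (hFi' b hb) ▸ aux_pos ha hci hb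
  have hFjpos : ∀ b : ℝ, 0 < b → 0 < Fj b := fun b hb => (hFj' b hb) ▸ aux_pos ha hcj hb
  constructor
  · intro b₁ b₂ hb₁ hlt
    have hb₂ : 0 < b₂ := hb₁.trans hlt
    have hi1 : Fi b₁ < Fi b₂ := by
      rw [hFi' b₁ hb₁, hFi' b₂ hb₂]; exact aux_mono_s12 ha hci hb₁ hb₂ hlt
    have hj1 : Fj b₁ < Fj b₂ := by
      rw [hFj' b₁ hb₁, hFj' b₂ hb₂]; exact aux_mono_s12 ha hcj hb₁ hb₂ hlt
    rw [hξ b₁, hξ b₂]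
    exact max_lt_max (div_lt_div_of_pos_left hQ (hFipos b₁ hb₁) hi1)
      (div_lt_div_of_pos_left hQ (hFjpos b₁ hb₁) hj1)
  · intro b₁ b₂ hb₁ hb₂ s hs hs1
    set m := s * b₁ + (1 - s) * b₂ with hm
    have hmpos : 0 < m := by rcases le_total b₁ b₂ with h | h <;> nlinarith
    have hcomb : ∀ (F : ℝ → ℝ), (∀ b : ℝ, 0 < b → 0 < F b) →
        (∀ b : ℝ, 0 < b → F b = auxG (2*N₀) (hi*p) b) →
        Q / F m ≤ s * (Q / F b₁) + (1 - s) * (Q / F b₂) := by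
      intro F hFpos hFeq
      have hu := hFpos b₁ hb₁
      have hv := hFpos b₂ hb₂
      have hw : 0 < s * F b₁ + (1-s) * F b₂ := by rcases le_total (F b₁) (F b₂) with h | h <;> nlinarith
      have hconc : s * F b₁ + (1-s) * F b₂ ≤ F m := by
        have := (aux_concave_s12 ha hci).2 (mem_Ioi.2 hb₁) (mem_Ioi.2 hb₂) hs
          (by linarith : (0:ℝ) ≤ 1 - s) (by ring)
        rw [hFeq b₁ hb₁, hFeq b₂ hb₂, hFeq m hmpos]
        simpa [smul_eq_mul] using this
      calc Q / F m ≤ Q / (s * F b₁ + (1-s) * F b₂) :=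
            div_le_div_of_nonneg_left hQ.le hw hconc
        _ ≤ s * (Q / F b₁) + (1 - s) * (Q / F b₂) := aux_invcomb hQ hu hv hs hs1
    have hgi := hcomb Fi hFipos hFi'
    have hgj : Q / Fj m ≤ s * (Q / Fj b₁) + (1 - s) * (Q / Fj b₂) := by
      have hu := hFjpos b₁ hb₁
      have hv := hFjpos b₂ hb₂
      have hw : 0 < s * Fj b₁ + (1-s) * Fj b₂ := by rcases le_total (Fj b₁) (Fj b₂) with h | h <;> nlinarith
      have hconc : s * Fj b₁ + (1-s) * Fj b₂ ≤ Fj m := by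
        have := (aux_concave_s12 ha hcj).2 (mem_Ioi.2 hb₁) (mem_Ioi.2 hb₂) hs
          (by linarith : (0:ℝ) ≤ 1 - s) (by ring)
        rw [hFj' b₁ hb₁, hFj' b₂ hb₂, hFj' m hmpos]
        simpa [smul_eq_mul] using this
      calc Q / Fj m ≤ Q / (s * Fj b₁ + (1-s) * Fj b₂) :=
            div_le_div_of_nonneg_left hQ.le hw hconc
        _ ≤ s * (Q / Fj b₁) + (1 - s) * (Q / Fj b₂) := aux_invcomb hQ hu hv hs hs1
    rw [hξ m, hξ b₁, hξ b₂]
    apply max_le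
    · refine hgi.trans (add_le_add ?_ ?_)
      · exact mul_le_mul_of_nonneg_left (le_max_left _ _) hs
      · exact mul_le_mul_of_nonneg_left (le_max_left _ _) (by linarith)
    · refine hgj.trans (add_le_add ?_ ?_)
      · exact mul_le_mul_of_nonneg_left (le_max_right _ _) hs
      · exact mul_le_mul_of_nonneg_left (le_max_right _ _) (by linarith)
end

section
/- The function G(b) = p·Q·F′(b) / F(b)², where F′(b) = log₂((2·N₀·b + 2·h·p)/(2·N₀·b + h·p)) − (2·N₀·b·h·p)/((ln 2)·(2·N₀·b + 2·h·p)·(2·N₀·b + h·p)), is strictly decreasing on the positive reals: for all 0 < b₁ < b₂, G(b₁) > G(b₂). -/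
/-- The function `G(b) = p·Q·F′(b) / F(b)²`, where `F′` is the derivative
expression of `F`, is strictly decreasing on the positive reals: for all `0 < b₁ < b₂`,
`G(b₁) > G(b₂)`. -/
theorem stmt_13 (h p N₀ Q : ℝ) (hh : 0 < h) (hp : 0 < p) (hN : 0 < N₀) (hQ : 0 < Q)
    (F F' G : ℝ → ℝ)
    (hF : ∀ b : ℝ, F b = b * Real.logb 2 (1 + h * p / (2 * N₀ * b + h * p)))
    (hF' : ∀ b : ℝ, F' b =
      Real.logb 2 ((2 * N₀ * b + 2 * h * p) / (2 * N₀ * b + h * p)) -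
        (2 * N₀ * b * h * p) /
          (Real.log 2 * (2 * N₀ * b + 2 * h * p) * (2 * N₀ * b + h * p)))
    (hG : ∀ b : ℝ, G b = p * Q * F' b / (F b) ^ 2)
    (b₁ b₂ : ℝ) (hb₁ : 0 < b₁) (hb : b₁ < b₂) :
    G b₁ > G b₂ := by
  have h2 : (0:ℝ) < Real.log 2 := Real.log_pos one_lt_two
  have hb₂ : 0 < b₂ := hb₁.trans hb
  have hK : 0 < h * p := mul_pos hh hp
  have hv : ∀ x : ℝ, 0 < x → 0 < 2 * N₀ * x + h * p := fun x hx => by positivity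
  have hu : ∀ x : ℝ, 0 < x → 0 < 2 * N₀ * x + 2 * h * p := fun x hx => by positivity
  set F₀ : ℝ → ℝ := fun x =>
    x * (Real.log (2 * N₀ * x + 2 * h * p) - Real.log (2 * N₀ * x + h * p)) / Real.log 2
    with hF₀def
  set F₁ : ℝ → ℝ := fun x =>
    (Real.log (2 * N₀ * x + 2 * h * p) - Real.log (2 * N₀ * x + h * p) -
      (2 * N₀ * x * h * p) / ((2 * N₀ * x + 2 * h * p) * (2 * N₀ * x + h * p))) / Real.log 2
    with hF₁def
  -- pointwise identifications on Ioi 0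
  have hFeq : Set.EqOn F F₀ (Set.Ioi 0) := by
    intro x hx
    have hvx := hv x hx
    have hux := hu x hx
    have e1 : 1 + h * p / (2 * N₀ * x + h * p) =
        (2 * N₀ * x + 2 * h * p) / (2 * N₀ * x + h * p) := by
      field_simp; ring
    rw [hF x, e1, Real.logb, Real.log_div hux.ne' hvx.ne', hF₀def]
    ring
  have hF'eq : Set.EqOn F' F₁ (Set.Ioi 0) := by
    intro x hx
    have hvx := hv x hx
    have hux := hu x hx
    rw [hF' x, Real.logb, Real.log_div hux.ne' hvx.ne', hF₁def]
    field_simp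
  -- basic derivatives
  have hdu : ∀ x : ℝ, HasDerivAt (fun y => 2 * N₀ * y + 2 * h * p) (2 * N₀) x := by
    intro x
    simpa using ((hasDerivAt_id x).const_mul (2 * N₀)).add_const (2 * h * p)
  have hdv : ∀ x : ℝ, HasDerivAt (fun y => 2 * N₀ * y + h * p) (2 * N₀) x := by
    intro x
    simpa using ((hasDerivAt_id x).const_mul (2 * N₀)).add_const (h * p)
  -- derivative of F₀ is F₁
  have hF₀d : ∀ x : ℝ, 0 < x → HasDerivAt F₀ (F₁ x) x := by
    intro x hx
    have hvx := hv x hx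
    have hux := hu x hx
    have hlu : HasDerivAt (fun y => Real.log (2 * N₀ * y + 2 * h * p))
        (2 * N₀ / (2 * N₀ * x + 2 * h * p)) x := (hdu x).log hux.ne'
    have hlv : HasDerivAt (fun y => Real.log (2 * N₀ * y + h * p))
        (2 * N₀ / (2 * N₀ * x + h * p)) x := (hdv x).log hvx.ne'
    have hmain : HasDerivAt
        (fun y => y * (Real.log (2 * N₀ * y + 2 * h * p) - Real.log (2 * N₀ * y + h * p)))
        (1 * (Real.log (2 * N₀ * x + 2 * h * p) - Real.log (2 * N₀ * x + h * p)) +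
          x * (2 * N₀ / (2 * N₀ * x + 2 * h * p) - 2 * N₀ / (2 * N₀ * x + h * p))) x :=
      (hasDerivAt_id x).mul (hlu.sub hlv)
    have := hmain.div_const (Real.log 2)
    refine this.congr_deriv ?_
    rw [hF₁def]
    field_simp
    ring
  -- derivative of F₁ is negative
  have hF₁d : ∀ x : ℝ, 0 < x → HasDerivAt F₁
      (-(2 * N₀ * (h * p) ^ 2 * (6 * N₀ * x + 4 * h * p)) /
        (((2 * N₀ * x + 2 * h * p) * (2 * N₀ * x + h * p)) ^ 2 * Real.log 2)) x := by
    intro x hx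
    have hvx := hv x hx
    have hux := hu x hx
    have hlu : HasDerivAt (fun y => Real.log (2 * N₀ * y + 2 * h * p))
        (2 * N₀ / (2 * N₀ * x + 2 * h * p)) x := (hdu x).log hux.ne'
    have hlv : HasDerivAt (fun y => Real.log (2 * N₀ * y + h * p))
        (2 * N₀ / (2 * N₀ * x + h * p)) x := (hdv x).log hvx.ne'
    have hnum : HasDerivAt (fun y => 2 * N₀ * y * h * p) (2 * N₀ * h * p) x := by
      simpa [mul_assoc, mul_comm, mul_left_comm] using
        ((((hasDerivAt_id x).const_mul (2 * N₀)).mul_const h).mul_const p)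
    have hden : HasDerivAt
        (fun y => (2 * N₀ * y + 2 * h * p) * (2 * N₀ * y + h * p))
        (2 * N₀ * (2 * N₀ * x + h * p) + (2 * N₀ * x + 2 * h * p) * (2 * N₀)) x :=
      (hdu x).mul (hdv x)
    have hdenne : (2 * N₀ * x + 2 * h * p) * (2 * N₀ * x + h * p) ≠ 0 :=
      (mul_pos hux hvx).ne'
    have hq : HasDerivAt
        (fun y => (2 * N₀ * y * h * p) / ((2 * N₀ * y + 2 * h * p) * (2 * N₀ * y + h * p)))
        ((2 * N₀ * h * p * ((2 * N₀ * x + 2 * h * p) * (2 * N₀ * x + h * p)) -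
          (2 * N₀ * x * h * p) *
            (2 * N₀ * (2 * N₀ * x + h * p) + (2 * N₀ * x + 2 * h * p) * (2 * N₀))) /
          ((2 * N₀ * x + 2 * h * p) * (2 * N₀ * x + h * p)) ^ 2) x :=
      hnum.div hden hdenne
    have hmain := ((hlu.sub hlv).sub hq).div_const (Real.log 2)
    refine hmain.congr_deriv ?_
    field_simp
    ring
  -- F' is positive on Ioi 0
  have hF'pos : ∀ x : ℝ, 0 < x → 0 < F' x := by
    intro x hx
    have hvx := hv x hx
    have hux := hu x hx
    rw [hF'eq hx, hF₁def]
    apply div_pos _ h2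
    have hratio : (2 * N₀ * x + h * p) / (2 * N₀ * x + 2 * h * p) < 1 := by
      rw [div_lt_one hux]; linarith
    have hlog := Real.log_lt_sub_one_of_pos
      (div_pos hvx hux) (ne_of_lt hratio)
    rw [Real.log_div hvx.ne' hux.ne'] at hlog
    have e1 : (1 : ℝ) - (2 * N₀ * x + h * p) / (2 * N₀ * x + 2 * h * p) -
        (2 * N₀ * x * h * p) / ((2 * N₀ * x + 2 * h * p) * (2 * N₀ * x + h * p)) =
        (h * p) * (h * p) / ((2 * N₀ * x + 2 * h * p) * (2 * N₀ * x + h * p)) := by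
      field_simp
      ring
    have e2 : 0 < (h * p) * (h * p) / ((2 * N₀ * x + 2 * h * p) * (2 * N₀ * x + h * p)) := by
      positivity
    linarith
  -- F is positive and strictly monotone on Ioi 0
  have hFpos : ∀ x : ℝ, 0 < x → 0 < F x := by
    intro x hx
    rw [hF x]
    have : (0:ℝ) < Real.logb 2 (1 + h * p / (2 * N₀ * x + h * p)) := by
      apply Real.logb_pos one_lt_two
      have : 0 < h * p / (2 * N₀ * x + h * p) := div_pos hK (hv x hx)
      linarith
    positivity
  have hFd : ∀ x : ℝ, 0 < x → HasDerivAt F (F' x) x := by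
    intro x hx
    have hev : F =ᶠ[nhds x] F₀ :=
      Filter.eventuallyEq_of_mem (Ioi_mem_nhds hx) hFeq
    rw [hF'eq hx]
    exact (hF₀d x hx).congr_of_eventuallyEq hev
  have hFmono : StrictMonoOn F (Set.Ioi 0) := by
    apply strictMonoOn_of_deriv_pos (convex_Ioi 0)
    · intro x hx
      exact ((hFd x hx).continuousAt).continuousWithinAt
    · intro x hx
      rw [interior_Ioi] at hx
      rw [(hFd x hx).deriv]
      exact hF'pos x hx
  have hF'anti : StrictAntiOn F' (Set.Ioi 0) := by
    apply strictAntiOn_of_deriv_neg (convex_Ioi 0)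
    · intro x hx
      have hev : F' =ᶠ[nhds x] F₁ :=
        Filter.eventuallyEq_of_mem (Ioi_mem_nhds hx) hF'eq
      exact (((hF₁d x hx).congr_of_eventuallyEq hev).continuousAt).continuousWithinAt
    · intro x hx
      rw [interior_Ioi] at hx
      have hev : F' =ᶠ[nhds x] F₁ :=
        Filter.eventuallyEq_of_mem (Ioi_mem_nhds hx) hF'eq
      rw [((hF₁d x hx).congr_of_eventuallyEq hev).deriv]
      have hx' : (0:ℝ) < x := hx
      have hvx := hv x hx
      have hux := hu x hx
      apply div_neg_of_neg_of_pos
      · have : 0 < 2 * N₀ * (h * p) ^ 2 * (6 * N₀ * x + 4 * h * p) := by positivity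
        linarith
      · exact mul_pos (by positivity) h2
  -- conclude
  have h1 : F b₁ < F b₂ := hFmono hb₁ hb₂ hb
  have h2' : F' b₂ < F' b₁ := hF'anti hb₁ hb₂ hb
  have h3 : 0 < F' b₂ := hF'pos b₂ hb₂
  have h4 : 0 < F b₁ := hFpos b₁ hb₁
  have h5 : 0 < F b₂ := hFpos b₂ hb₂
  rw [hG b₁, hG b₂, gt_iff_lt, div_lt_div_iff₀ (by positivity) (by positivity)]
  have hsq : F b₁ ^ 2 < F b₂ ^ 2 := by nlinarith
  have hpq : 0 < p * Q := mul_pos hp hQ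
  have hA : 0 < p * Q * F' b₁ := mul_pos hpq (h3.trans h2')
  calc p * Q * F' b₂ * F b₁ ^ 2 < p * Q * F' b₁ * F b₁ ^ 2 := by
        exact mul_lt_mul_of_pos_right (mul_lt_mul_of_pos_left h2' hpq) (pow_pos h4 2)
    _ < p * Q * F' b₁ * F b₂ ^ 2 := by exact mul_lt_mul_of_pos_left hsq hA
end

section
/- The function G(b) = p·Q·F′(b) / F(b)² maps the open interval (0, ∞) bijectively onto (0, ∞): G tends to +∞ as b → 0⁺, G tends to 0 as b → +∞, and for every Θ > 0 there exists a unique b > 0 with G(b) = Θ. -/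
open Real Filter Set

noncomputable def Fp (h p N₀ : ℝ) : ℝ → ℝ := fun b =>
  Real.logb 2 ((2 * N₀ * b + 2 * h * p) / (2 * N₀ * b + h * p)) -
    (2 * N₀ * b * h * p) /
      (Real.log 2 * (2 * N₀ * b + 2 * h * p) * (2 * N₀ * b + h * p))

noncomputable def Fd (h p N₀ : ℝ) : ℝ → ℝ := fun b =>
  b * Real.logb 2 (1 + h * p / (2 * N₀ * b + h * p))

lemma log2pos : (0:ℝ) < Real.log 2 := Real.log_pos one_lt_two

lemma Fp_pos {h p N₀ : ℝ} (hh : 0 < h) (hp : 0 < p) (hN : 0 < N₀)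
    {b : ℝ} (hb : 0 ≤ b) : 0 < Fp h p N₀ b := by
  have hB : 0 < 2 * N₀ * b + h * p := by nlinarith
  have hA : 0 < 2 * N₀ * b + 2 * h * p := by nlinarith
  have key : Real.log ((2 * N₀ * b + 2 * h * p) / (2 * N₀ * b + h * p))
      ≥ h * p / (2 * N₀ * b + 2 * h * p) := by
    have h1 := Real.log_le_sub_one_of_pos
      (show (0:ℝ) < (2 * N₀ * b + h * p) / (2 * N₀ * b + 2 * h * p) by positivity)
    rw [Real.log_div hB.ne' hA.ne'] at h1
    rw [Real.log_div hA.ne' hB.ne']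
    have h2 : (2 * N₀ * b + h * p) / (2 * N₀ * b + 2 * h * p) - 1
        = -(h * p / (2 * N₀ * b + 2 * h * p)) := by field_simp; ring
    linarith [h1, h2.ge, h2.le]
  have hform : Fp h p N₀ b =
      (Real.log ((2 * N₀ * b + 2 * h * p) / (2 * N₀ * b + h * p))
        - (2 * N₀ * b * h * p) / ((2 * N₀ * b + 2 * h * p) * (2 * N₀ * b + h * p)))
        / Real.log 2 := by
    unfold Fp
    rw [Real.logb]
    field_simp
  rw [hform]
  apply div_pos _ log2pos
  have hlt : (2 * N₀ * b * h * p) / ((2 * N₀ * b + 2 * h * p) * (2 * N₀ * b + h * p))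
      < h * p / (2 * N₀ * b + 2 * h * p) := by
    rw [div_lt_div_iff₀ (by positivity) hA]
    nlinarith [mul_pos hA (mul_pos (mul_pos hh hp) (mul_pos hh hp))]
  linarith

lemma Fp_hasDerivAt {h p N₀ : ℝ} (hh : 0 < h) (hp : 0 < p) (hN : 0 < N₀)
    {b : ℝ} (hb : 0 ≤ b) :
    HasDerivAt (Fp h p N₀)
      (-((2 * N₀) * (h * p) ^ 2 * (3 * (2 * N₀ * b) + 4 * (h * p))) /
        (Real.log 2 * ((2 * N₀ * b + 2 * h * p) * (2 * N₀ * b + h * p)) ^ 2)) b := by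
  have hB : 0 < 2 * N₀ * b + h * p := by nlinarith
  have hA : 0 < 2 * N₀ * b + 2 * h * p := by nlinarith
  -- derivative building blocks
  have hAd : HasDerivAt (fun x : ℝ => 2 * N₀ * x + 2 * h * p) (2 * N₀) b := by
    simpa using ((hasDerivAt_id b).const_mul (2 * N₀)).add_const (2 * h * p)
  have hBd : HasDerivAt (fun x : ℝ => 2 * N₀ * x + h * p) (2 * N₀) b := by
    simpa using ((hasDerivAt_id b).const_mul (2 * N₀)).add_const (h * p)
  have hlogA := hAd.log hA.ne'
  have hlogB := hBd.log hB.ne'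
  have hnum : HasDerivAt (fun x : ℝ => 2 * N₀ * x * h * p) (2 * N₀ * h * p) b := by
    simpa [mul_assoc] using (((hasDerivAt_id b).const_mul (2 * N₀)).mul_const h).mul_const p
  have hden : HasDerivAt (fun x : ℝ => Real.log 2 * (2 * N₀ * x + 2 * h * p) * (2 * N₀ * x + h * p))
      ((Real.log 2 * (2 * N₀)) * (2 * N₀ * b + h * p)
        + (Real.log 2 * (2 * N₀ * b + 2 * h * p)) * (2 * N₀)) b :=
    (hAd.const_mul (Real.log 2)).mul hBd
  have hdenne : Real.log 2 * (2 * N₀ * b + 2 * h * p) * (2 * N₀ * b + h * p) ≠ 0 := by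
    positivity
  have hq := hnum.div hden hdenne
  have hmain := ((hlogA.sub hlogB).div_const (Real.log 2)).sub hq
  have heq : Fp h p N₀ =ᶠ[nhds b] (fun x =>
      (Real.log (2 * N₀ * x + 2 * h * p) - Real.log (2 * N₀ * x + h * p)) / Real.log 2 -
        (2 * N₀ * x * h * p) /
          (Real.log 2 * (2 * N₀ * x + 2 * h * p) * (2 * N₀ * x + h * p))) := by
    have hopen : ∀ᶠ x in nhds b, 0 < 2 * N₀ * x + h * p := by
      have : ContinuousAt (fun x : ℝ => 2 * N₀ * x + h * p) b := by fun_prop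
      exact this.eventually (eventually_gt_nhds hB)
    filter_upwards [hopen] with x hx
    have hAx : 0 < 2 * N₀ * x + 2 * h * p := by nlinarith
    unfold Fp
    rw [Real.logb, Real.log_div hAx.ne' hx.ne']
  refine (hmain.congr_of_eventuallyEq heq).congr_deriv ?_
  field_simp
  ring

lemma Fd_hasDerivAt {h p N₀ : ℝ} (hh : 0 < h) (hp : 0 < p) (hN : 0 < N₀)
    {b : ℝ} (hb : 0 ≤ b) :
    HasDerivAt (Fd h p N₀) (Fp h p N₀ b) b := by
  have hB : 0 < 2 * N₀ * b + h * p := by nlinarith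
  have hA : 0 < 2 * N₀ * b + 2 * h * p := by nlinarith
  have hAd : HasDerivAt (fun x : ℝ => 2 * N₀ * x + 2 * h * p) (2 * N₀) b := by
    simpa using ((hasDerivAt_id b).const_mul (2 * N₀)).add_const (2 * h * p)
  have hBd : HasDerivAt (fun x : ℝ => 2 * N₀ * x + h * p) (2 * N₀) b := by
    simpa using ((hasDerivAt_id b).const_mul (2 * N₀)).add_const (h * p)
  have hlogA := hAd.log hA.ne'
  have hlogB := hBd.log hB.ne'
  have hmain := (hasDerivAt_id b).mul ((hlogA.sub hlogB).div_const (Real.log 2))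
  have heq : Fd h p N₀ =ᶠ[nhds b] (fun x =>
      id x * ((Real.log (2 * N₀ * x + 2 * h * p) - Real.log (2 * N₀ * x + h * p)) / Real.log 2)) := by
    have hopen : ∀ᶠ x in nhds b, 0 < 2 * N₀ * x + h * p := by
      have : ContinuousAt (fun x : ℝ => 2 * N₀ * x + h * p) b := by fun_prop
      exact this.eventually (eventually_gt_nhds hB)
    filter_upwards [hopen] with x hx
    have hAx : 0 < 2 * N₀ * x + 2 * h * p := by nlinarith
    have harg : 1 + h * p / (2 * N₀ * x + h * p)
        = (2 * N₀ * x + 2 * h * p) / (2 * N₀ * x + h * p) := by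
      field_simp; ring
    unfold Fd
    rw [harg, Real.logb, Real.log_div hAx.ne' hx.ne']
    rfl
  refine (hmain.congr_of_eventuallyEq heq).congr_deriv ?_
  unfold Fp
  rw [Real.logb, Real.log_div hA.ne' hB.ne']
  simp only [Pi.sub_apply, id_eq]
  field_simp
  ring

lemma Fp_strictAntiOn {h p N₀ : ℝ} (hh : 0 < h) (hp : 0 < p) (hN : 0 < N₀) :
    StrictAntiOn (Fp h p N₀) (Ici 0) := by
  apply strictAntiOn_of_deriv_neg (convex_Ici 0)
  · exact fun x hx => (Fp_hasDerivAt hh hp hN hx).continuousAt.continuousWithinAt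
  · intro x hx
    rw [interior_Ici] at hx
    rw [(Fp_hasDerivAt hh hp hN hx.le).deriv]
    have hB : 0 < 2 * N₀ * x + h * p := by nlinarith [(mem_Ioi.mp hx).le]
    have hA : 0 < 2 * N₀ * x + 2 * h * p := by nlinarith [(mem_Ioi.mp hx).le]
    apply div_neg_of_neg_of_pos
    · have : 0 < (2 * N₀) * (h * p) ^ 2 * (3 * (2 * N₀ * x) + 4 * (h * p)) := by
        have := (mem_Ioi.mp hx).le; positivity
      linarith
    · exact mul_pos log2pos (pow_pos (mul_pos hA hB) 2)

lemma Fd_strictMonoOn {h p N₀ : ℝ} (hh : 0 < h) (hp : 0 < p) (hN : 0 < N₀) :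
    StrictMonoOn (Fd h p N₀) (Ici 0) := by
  apply strictMonoOn_of_deriv_pos (convex_Ici 0)
  · exact fun x hx => (Fd_hasDerivAt hh hp hN hx).continuousAt.continuousWithinAt
  · intro x hx
    rw [interior_Ici] at hx
    rw [(Fd_hasDerivAt hh hp hN hx.le).deriv]
    exact Fp_pos hh hp hN hx.le

lemma Fd_zero (h p N₀ : ℝ) : Fd h p N₀ 0 = 0 := by simp [Fd]

lemma Fd_pos {h p N₀ : ℝ} (hh : 0 < h) (hp : 0 < p) (hN : 0 < N₀)
    {b : ℝ} (hb : 0 < b) : 0 < Fd h p N₀ b := by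
  have := Fd_strictMonoOn hh hp hN (self_mem_Ici) (le_of_lt hb : (0:ℝ) ≤ b) hb
  rwa [Fd_zero] at this

lemma Fp_zero {h p N₀ : ℝ} (hh : 0 < h) (hp : 0 < p) (hN : 0 < N₀) :
    Fp h p N₀ 0 = 1 := by
  have hB : (0:ℝ) < h * p := mul_pos hh hp
  have h2 : (2 * N₀ * 0 + 2 * h * p) / (2 * N₀ * 0 + h * p) = 2 := by
    field_simp; ring
  simp only [Fp, h2]
  norm_num [Real.logb_self_eq_one]

lemma Fp_tendsto_atTop {h p N₀ : ℝ} (hh : 0 < h) (hp : 0 < p) (hN : 0 < N₀) :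
    Tendsto (Fp h p N₀) atTop (nhds 0) := by
  have hratio : Tendsto (fun x : ℝ => (2 * N₀ * x + 2 * h * p) / (2 * N₀ * x + h * p))
      atTop (nhds 1) := by
    have h1 : Tendsto (fun x : ℝ => (2 * N₀ + 2 * h * p / x) / (2 * N₀ + h * p / x))
        atTop (nhds 1) := by
      have ha : Tendsto (fun x : ℝ => 2 * N₀ + 2 * h * p / x) atTop (nhds (2 * N₀)) := by
        simpa using tendsto_const_nhds.add ((tendsto_id (α := ℝ)).const_div_atTop (2 * h * p))
      have hb : Tendsto (fun x : ℝ => 2 * N₀ + h * p / x) atTop (nhds (2 * N₀)) := by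
        simpa using tendsto_const_nhds.add ((tendsto_id (α := ℝ)).const_div_atTop (h * p))
      have h2N : (2 * N₀ : ℝ) ≠ 0 := by positivity
      have := ha.div hb h2N
      rw [div_self h2N] at this
      exact this
    apply h1.congr'
    filter_upwards [eventually_gt_atTop (0:ℝ)] with x hx
    field_simp
  have hterm1 : Tendsto (fun x : ℝ => Real.logb 2 ((2 * N₀ * x + 2 * h * p) / (2 * N₀ * x + h * p)))
      atTop (nhds 0) := by
    have hc : ContinuousAt (fun y : ℝ => Real.logb 2 y) 1 := by
      apply Real.continuousAt_logb
      · norm_num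
    have := hc.tendsto.comp hratio
    rw [Real.logb_one] at this
    exact this
  have hterm2 : Tendsto (fun x : ℝ => (2 * N₀ * x * h * p) /
      (Real.log 2 * (2 * N₀ * x + 2 * h * p) * (2 * N₀ * x + h * p))) atTop (nhds 0) := by
    apply squeeze_zero' (g := fun x : ℝ => h * p / (Real.log 2 * (2 * N₀) * x))
    · filter_upwards [eventually_gt_atTop (0:ℝ)] with x hx
      have hB : 0 < 2 * N₀ * x + h * p := by nlinarith
      have hA : 0 < 2 * N₀ * x + 2 * h * p := by nlinarith
      positivity
    · filter_upwards [eventually_gt_atTop (0:ℝ)] with x hx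
      have hB : 0 < 2 * N₀ * x + h * p := by nlinarith
      have hA : 0 < 2 * N₀ * x + 2 * h * p := by nlinarith
      rw [div_le_div_iff₀ (by positivity) (by positivity)]
      have hABu : (2*N₀*x)*(2*N₀*x) ≤ (2*N₀*x+2*h*p)*(2*N₀*x+h*p) := by nlinarith [mul_pos (mul_pos hN hx) (mul_pos hh hp), mul_pos hh hp, mul_pos hN hx]
      nlinarith [mul_le_mul_of_nonneg_left hABu
        (le_of_lt (mul_pos log2pos (mul_pos hh hp)))]
    · have : Tendsto (fun x : ℝ => Real.log 2 * (2 * N₀) * x) atTop atTop :=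
        Tendsto.const_mul_atTop (by positivity) tendsto_id
      exact this.const_div_atTop (h * p)
  have := hterm1.sub hterm2
  rw [sub_zero] at this
  exact this


/-- The function `G(b) = p·Q·F′(b) / F(b)²` maps `(0, ∞)` bijectively onto
`(0, ∞)`: `G → +∞` as `b → 0⁺`, `G → 0` as `b → +∞`, and for every `Θ > 0` there exists
a unique `b > 0` with `G(b) = Θ`. -/
theorem stmt_14 (h p N₀ Q : ℝ) (hh : 0 < h) (hp : 0 < p) (hN : 0 < N₀) (hQ : 0 < Q)
    (F F' G : ℝ → ℝ)
    (hF : ∀ b : ℝ, F b = b * Real.logb 2 (1 + h * p / (2 * N₀ * b + h * p)))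
    (hF' : ∀ b : ℝ, F' b =
      Real.logb 2 ((2 * N₀ * b + 2 * h * p) / (2 * N₀ * b + h * p)) -
        (2 * N₀ * b * h * p) /
          (Real.log 2 * (2 * N₀ * b + 2 * h * p) * (2 * N₀ * b + h * p)))
    (hG : ∀ b : ℝ, G b = p * Q * F' b / (F b) ^ 2) :
    Filter.Tendsto G (nhdsWithin 0 (Set.Ioi 0)) Filter.atTop ∧
    Filter.Tendsto G Filter.atTop (nhds 0) ∧
    (∀ Θ : ℝ, 0 < Θ → ∃! b : ℝ, 0 < b ∧ G b = Θ) := by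
  have hGfun : G = fun b => p * Q * Fp h p N₀ b / (Fd h p N₀ b) ^ 2 := by
    funext b
    rw [hG, hF', hF]; rfl
  subst hGfun
  have part1 : Filter.Tendsto (fun b => p * Q * Fp h p N₀ b / (Fd h p N₀ b) ^ 2)
      (nhdsWithin 0 (Set.Ioi 0)) Filter.atTop := by
    have hnum : Tendsto (fun b => p * Q * Fp h p N₀ b) (nhdsWithin 0 (Ioi 0)) (nhds (p * Q)) := by
      have hc : ContinuousAt (Fp h p N₀) 0 := (Fp_hasDerivAt hh hp hN le_rfl).continuousAt
      have h1 : Tendsto (fun b => p * Q * Fp h p N₀ b) (nhds 0) (nhds (p * Q * Fp h p N₀ 0)) :=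
        tendsto_const_nhds.mul hc.tendsto
      rw [Fp_zero hh hp hN, mul_one] at h1
      exact h1.mono_left nhdsWithin_le_nhds
    have hden : Tendsto (fun b => ((Fd h p N₀ b) ^ 2)⁻¹) (nhdsWithin 0 (Ioi 0)) atTop := by
      apply tendsto_inv_nhdsGT_zero.comp
      apply tendsto_nhdsWithin_of_tendsto_nhds_of_eventually_within
      · have hc : ContinuousAt (Fd h p N₀) 0 := (Fd_hasDerivAt hh hp hN le_rfl).continuousAt
        have h2 := (hc.pow 2).tendsto
        have h3 : Tendsto (fun x => Fd h p N₀ x ^ 2) (nhds 0) (nhds 0) := by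
          rw [Pi.pow_apply, Fd_zero, zero_pow two_ne_zero] at h2
          exact h2
        exact h3.mono_left nhdsWithin_le_nhds
      · filter_upwards [self_mem_nhdsWithin] with b hb
        exact pow_pos (Fd_pos hh hp hN hb) 2
    exact (Filter.Tendsto.pos_mul_atTop (by positivity) hnum hden).congr
      (fun b => by rw [div_eq_mul_inv])
  have part2 : Filter.Tendsto (fun b => p * Q * Fp h p N₀ b / (Fd h p N₀ b) ^ 2)
      Filter.atTop (nhds 0) := by
    apply squeeze_zero' (g := fun b => p * Q * Fp h p N₀ b / (Fd h p N₀ 1) ^ 2)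
    · filter_upwards [eventually_ge_atTop (1:ℝ)] with b hb
      have h1 : (0:ℝ) ≤ b := by linarith
      have := Fp_pos hh hp hN h1
      have := Fd_pos hh hp hN (by linarith : (0:ℝ) < b)
      positivity
    · filter_upwards [eventually_ge_atTop (1:ℝ)] with b hb
      have hF1 : 0 < Fd h p N₀ 1 := Fd_pos hh hp hN one_pos
      have hmono : Fd h p N₀ 1 ≤ Fd h p N₀ b :=
        ((Fd_strictMonoOn hh hp hN).monotoneOn) (by norm_num) (by norm_num; linarith) hb
      have hFpb : 0 < Fp h p N₀ b := Fp_pos hh hp hN (by linarith)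
      apply div_le_div_of_nonneg_left (by positivity) (pow_pos hF1 2)
      exact pow_le_pow_left₀ hF1.le hmono 2
    · have := ((Fp_tendsto_atTop hh hp hN).const_mul (p * Q)).div_const ((Fd h p N₀ 1) ^ 2)
      simpa [mul_div_assoc] using this
  refine ⟨part1, part2, ?_⟩
  intro Θ hΘ
  set G : ℝ → ℝ := fun b => p * Q * Fp h p N₀ b / (Fd h p N₀ b) ^ 2 with hGdef
  have hanti : StrictAntiOn G (Ioi 0) := by
    intro b1 h1 b2 h2 hlt
    simp only [hGdef]
    have hFd1 := Fd_pos hh hp hN h1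
    have hFd2 := Fd_pos hh hp hN h2
    have hFp1 := Fp_pos hh hp hN (le_of_lt h1)
    have hFp2 := Fp_pos hh hp hN (le_of_lt h2)
    have hFplt : Fp h p N₀ b2 < Fp h p N₀ b1 :=
      Fp_strictAntiOn hh hp hN (mem_Ici.mpr (le_of_lt h1)) (mem_Ici.mpr (le_of_lt h2)) hlt
    have hFdlt : Fd h p N₀ b1 < Fd h p N₀ b2 :=
      Fd_strictMonoOn hh hp hN (mem_Ici.mpr (le_of_lt h1)) (mem_Ici.mpr (le_of_lt h2)) hlt
    have hsq : (Fd h p N₀ b1) ^ 2 < (Fd h p N₀ b2) ^ 2 := by nlinarith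
    rw [div_lt_div_iff₀ (pow_pos hFd2 2) (pow_pos hFd1 2)]
    nlinarith [mul_lt_mul_of_pos_left
      (mul_lt_mul'' hFplt hsq hFp2.le (pow_pos hFd1 2).le) (mul_pos hp hQ)]
  obtain ⟨a, haG, ha0⟩ := ((part1.eventually_ge_atTop (Θ + 1)).and self_mem_nhdsWithin).exists
  obtain ⟨c, hcG, hac⟩ :=
    ((part2.eventually (eventually_lt_nhds hΘ)).and (eventually_ge_atTop a)).exists
  have ha0' : (0:ℝ) < a := ha0
  have hcont : ContinuousOn G (Icc a c) := by
    intro x hx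
    have hx0 : 0 < x := lt_of_lt_of_le ha0' hx.1
    have e1 : ContinuousAt (Fp h p N₀) x := (Fp_hasDerivAt hh hp hN hx0.le).continuousAt
    have e2 : ContinuousAt (Fd h p N₀) x := (Fd_hasDerivAt hh hp hN hx0.le).continuousAt
    have hne : (Fd h p N₀ x) ^ 2 ≠ 0 := (pow_pos (Fd_pos hh hp hN hx0) 2).ne'
    exact ((continuousAt_const.mul e1).div (e2.pow 2) hne).continuousWithinAt
  have hmem : Θ ∈ Icc (G c) (G a) := ⟨hcG.le, by linarith⟩
  obtain ⟨b, hbmem, hGb⟩ := intermediate_value_Icc' hac hcont hmem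
  have hb0 : 0 < b := lt_of_lt_of_le ha0' hbmem.1
  refine ⟨b, ⟨hb0, hGb⟩, ?_⟩
  rintro y ⟨hy0, hGy⟩
  exact hanti.injOn hy0 hb0 (by rw [hGy, hGb])
end

section
/- Let c be a real number with 0 < c < h·p/(2·N₀·ln 2), and let b₀ > 0 be the unique positive solution of F(b₀) = c. Then for every b > 0, the inequality F(b) ≥ c holds if and only if b ≥ b₀; that is, the delay constraint is equivalent to a bandwidth lower bound. -/
/-- Let `0 < c < h·p/(2·N₀·ln 2)` and let `b₀ > 0` be the unique positive
solution of `F(b₀) = c`. Then for every `b > 0`, `F(b) ≥ c ↔ b ≥ b₀`: the delay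
constraint is equivalent to a bandwidth lower bound. -/
theorem stmt_15 (h p N₀ : ℝ) (hh : 0 < h) (hp : 0 < p) (hN : 0 < N₀)
    (F : ℝ → ℝ)
    (hF : ∀ b : ℝ, F b = b * Real.logb 2 (1 + h * p / (2 * N₀ * b + h * p)))
    (c : ℝ) (hc0 : 0 < c) (hc1 : c < h * p / (2 * N₀ * Real.log 2))
    (b₀ : ℝ) (hb₀ : 0 < b₀) (hFb₀ : F b₀ = c)
    (b : ℝ) (hb : 0 < b) :
    F b ≥ c ↔ b ≥ b₀ := by
  have ha : 0 < h * p := mul_pos hh hp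
  set a := h * p with ha_def
  have hlog2 : (0:ℝ) < Real.log 2 := Real.log_pos one_lt_two
  set G : ℝ → ℝ := fun x => x * (Real.log (2*N₀*x + 2*a) - Real.log (2*N₀*x + a))
    with hGdef
  have hFG : ∀ x : ℝ, 0 < x → F x = G x / Real.log 2 := by
    intro x hx
    have hv : 0 < 2*N₀*x + a := by positivity
    have hu : 0 < 2*N₀*x + 2*a := by positivity
    rw [hF x]
    have h1 : 1 + h*p/(2*N₀*x + h*p) = (2*N₀*x + 2*a)/(2*N₀*x + a) := by
      rw [← ha_def]; field_simp; ring
    rw [h1, Real.logb, Real.log_div (ne_of_gt hu) (ne_of_gt hv)]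
    simp only [hGdef]
    ring
  -- derivative of G at x > 0
  have hderiv : ∀ x : ℝ, x ∈ Set.Ioi (0:ℝ) →
      HasDerivAt G ((Real.log (2*N₀*x + 2*a) - Real.log (2*N₀*x + a))
        + x * (2*N₀/(2*N₀*x + 2*a) - 2*N₀/(2*N₀*x + a))) x := by
    intro x hx
    have hx : (0:ℝ) < x := hx
    have hv : 0 < 2*N₀*x + a := by positivity
    have hu : 0 < 2*N₀*x + 2*a := by positivity
    have h1 : HasDerivAt (fun y : ℝ => 2*N₀*y + 2*a) (2*N₀) x := by
      simpa using ((hasDerivAt_id x).const_mul (2*N₀)).add_const (2*a)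
    have h2 : HasDerivAt (fun y : ℝ => 2*N₀*y + a) (2*N₀) x := by
      simpa using ((hasDerivAt_id x).const_mul (2*N₀)).add_const a
    have hlu := h1.log (ne_of_gt hu)
    have hlv := h2.log (ne_of_gt hv)
    have := (hasDerivAt_id x).mul (hlu.sub hlv)
    exact this.congr_deriv (by simp only [id_eq, Pi.sub_apply]; ring)
  have hmono : StrictMonoOn G (Set.Ioi 0) := by
    apply strictMonoOn_of_deriv_pos (convex_Ioi 0)
    · exact fun x hx => (hderiv x hx).continuousAt.continuousWithinAt
    · intro x hx
      rw [interior_Ioi] at hx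
      have hx' : (0:ℝ) < x := hx
      have hv : 0 < 2*N₀*x + a := by positivity
      have hu : 0 < 2*N₀*x + 2*a := by positivity
      rw [(hderiv x hx).deriv]
      have hvu : (2*N₀*x + a)/(2*N₀*x + 2*a) < 1 := by
        rw [div_lt_one hu]; linarith
      have hvu0 : (0:ℝ) < (2*N₀*x + a)/(2*N₀*x + 2*a) := by positivity
      have hkey := Real.log_lt_sub_one_of_pos hvu0 (ne_of_lt hvu)
      rw [Real.log_div (ne_of_gt hv) (ne_of_gt hu)] at hkey
      -- hkey : log v - log u < v/u - 1
      have e0 : (2*N₀*x + a)/(2*N₀*x + 2*a) - 1 = -(a/(2*N₀*x + 2*a)) := by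
        field_simp
        ring
      have e1 : x * (2*N₀/(2*N₀*x + 2*a) - 2*N₀/(2*N₀*x + a))
          = -(2*N₀*x*a/((2*N₀*x + 2*a)*(2*N₀*x + a))) := by
        field_simp; ring
      have e2 : a/(2*N₀*x + 2*a) - 2*N₀*x*a/((2*N₀*x + 2*a)*(2*N₀*x + a))
          = a*a/((2*N₀*x + 2*a)*(2*N₀*x + a)) := by
        field_simp; ring
      have e3 : 0 < a*a/((2*N₀*x + 2*a)*(2*N₀*x + a)) := by positivity
      rw [e0] at hkey
      linarith
  have hb₀' : b₀ ∈ Set.Ioi (0:ℝ) := hb₀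
  have hb' : b ∈ Set.Ioi (0:ℝ) := hb
  have hGle : G b₀ ≤ G b ↔ b₀ ≤ b := hmono.le_iff_le hb₀' hb'
  rw [hFG b hb, ← hFb₀, hFG b₀ hb₀]
  constructor
  · intro hge
    exact hGle.mp (by exact (div_le_div_iff_of_pos_right hlog2).mp hge)
  · intro hge
    exact (div_le_div_iff_of_pos_right hlog2).mpr (hGle.mpr hge)
end

section
/- Let c be a real number with 0 < c < h_u·p/(2·N₀·ln 2) for both u ∈ {i, j}, and for each u let b_u > 0 be the unique positive solution of F_u(b_u) = c. Then for every b > 0, the two inequalities F_i(b) ≥ c and F_j(b) ≥ c hold simultaneously if and only if b ≥ max(b_i, b_j); that is, the joint latency constraint of the user pair is equivalent to the single bandwidth lower bound max(b_i, b_j). -/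
open Real Set

private lemma aux_g_mono (A N₀ : ℝ) (hA : 0 < A) (hN : 0 < N₀) :
    StrictMonoOn (fun b : ℝ => b * (Real.log (2*N₀*b + 2*A) - Real.log (2*N₀*b + A)))
      (Set.Ioi 0) := by
  apply strictMonoOn_of_deriv_pos (convex_Ioi 0)
  · apply ContinuousOn.mul continuousOn_id
    apply ContinuousOn.sub
    · apply ContinuousOn.log (by fun_prop)
      intro x hx
      have hx0 : (0:ℝ) < x := hx
      positivity
    · apply ContinuousOn.log (by fun_prop)
      intro x hx
      have hx0 : (0:ℝ) < x := hx
      positivity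
  · intro x hx
    rw [interior_Ioi] at hx
    have hx0 : (0:ℝ) < x := hx
    have h1 : (0:ℝ) < 2*N₀*x + 2*A := by positivity
    have h2 : (0:ℝ) < 2*N₀*x + A := by positivity
    have hd1 : HasDerivAt (fun b : ℝ => 2*N₀*b + 2*A) (2*N₀) x := by
      simpa using ((hasDerivAt_id x).const_mul (2*N₀)).add_const (2*A)
    have hd2 : HasDerivAt (fun b : ℝ => 2*N₀*b + A) (2*N₀) x := by
      simpa using ((hasDerivAt_id x).const_mul (2*N₀)).add_const A
    have hl1 : HasDerivAt (fun b : ℝ => Real.log (2*N₀*b + 2*A))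
        ((2*N₀*x + 2*A)⁻¹ * (2*N₀)) x := by
      exact (Real.hasDerivAt_log h1.ne').comp x hd1
    have hl2 : HasDerivAt (fun b : ℝ => Real.log (2*N₀*b + A))
        ((2*N₀*x + A)⁻¹ * (2*N₀)) x := by
      exact (Real.hasDerivAt_log h2.ne').comp x hd2
    have hg : HasDerivAt (fun b : ℝ => b * (Real.log (2*N₀*b + 2*A) - Real.log (2*N₀*b + A)))
        (1 * (Real.log (2*N₀*x + 2*A) - Real.log (2*N₀*x + A)) +
          x * ((2*N₀*x + 2*A)⁻¹ * (2*N₀) - (2*N₀*x + A)⁻¹ * (2*N₀))) x :=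
      (hasDerivAt_id x).mul (hl1.sub hl2)
    rw [hg.deriv]
    -- log bound: log(X+2A) - log(X+A) > A/(X+2A)
    have hlog : Real.log (2*N₀*x + A) - Real.log (2*N₀*x + 2*A) <
        (2*N₀*x + A)/(2*N₀*x + 2*A) - 1 := by
      have hy : (0:ℝ) < (2*N₀*x + A)/(2*N₀*x + 2*A) := by positivity
      have hy1 : (2*N₀*x + A)/(2*N₀*x + 2*A) ≠ 1 := by
        intro h
        have := (div_eq_one_iff_eq h1.ne').mp h
        nlinarith
      have := Real.log_lt_sub_one_of_pos hy hy1
      rwa [Real.log_div h2.ne' h1.ne'] at this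
    have hA2 : (0:ℝ) < A*A / ((2*N₀*x + A) * (2*N₀*x + 2*A)) := by positivity
    have hkey : ((2*N₀*x + A)/(2*N₀*x + 2*A) - 1) * (-1) +
        x * ((2*N₀*x + 2*A)⁻¹ * (2*N₀) - (2*N₀*x + A)⁻¹ * (2*N₀)) =
        A*A / ((2*N₀*x + A) * (2*N₀*x + 2*A)) := by
      field_simp
      ring
    nlinarith [hlog, hA2, hkey]

private lemma aux_F_mono (A N₀ : ℝ) (hA : 0 < A) (hN : 0 < N₀) :
    StrictMonoOn (fun b : ℝ => b * Real.logb 2 (1 + A / (2*N₀*b + A))) (Set.Ioi 0) := by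
  have h2 : (0:ℝ) < Real.log 2 := Real.log_pos one_lt_two
  have heq : ∀ x ∈ Set.Ioi (0:ℝ),
      x * Real.logb 2 (1 + A / (2*N₀*x + A)) =
      (x * (Real.log (2*N₀*x + 2*A) - Real.log (2*N₀*x + A))) / Real.log 2 := by
    intro x hx
    have hx0 : (0:ℝ) < x := hx
    have hA1 : (0:ℝ) < 2*N₀*x + A := by positivity
    have hA2 : (0:ℝ) < 2*N₀*x + 2*A := by positivity
    have : 1 + A / (2*N₀*x + A) = (2*N₀*x + 2*A) / (2*N₀*x + A) := by
      field_simp; ring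
    rw [this, Real.logb, Real.log_div hA2.ne' hA1.ne']
    ring
  intro x hx y hy hxy
  show x * Real.logb 2 (1 + A / (2*N₀*x + A)) < y * Real.logb 2 (1 + A / (2*N₀*y + A))
  rw [heq x hx, heq y hy]
  exact (div_lt_div_iff_of_pos_right h2).mpr (aux_g_mono A N₀ hA hN hx hy hxy)

theorem stmt_16 (p N₀ hi hj : ℝ) (hp : 0 < p) (hN : 0 < N₀) (hhi : 0 < hi) (hhj : 0 < hj)
    (Fi Fj : ℝ → ℝ)
    (hFi : ∀ b : ℝ, Fi b = b * Real.logb 2 (1 + hi * p / (2 * N₀ * b + hi * p)))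
    (hFj : ∀ b : ℝ, Fj b = b * Real.logb 2 (1 + hj * p / (2 * N₀ * b + hj * p)))
    (c : ℝ) (hc0 : 0 < c)
    (hci : c < hi * p / (2 * N₀ * Real.log 2)) (hcj : c < hj * p / (2 * N₀ * Real.log 2))
    (bi bj : ℝ) (hbi : 0 < bi) (hbj : 0 < bj)
    (hFbi : Fi bi = c) (hFbj : Fj bj = c)
    (b : ℝ) (hb : 0 < b) :
    (Fi b ≥ c ∧ Fj b ≥ c) ↔ b ≥ max bi bj := by
  have hMi := aux_F_mono (hi * p) N₀ (by positivity) hN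
  have hMj := aux_F_mono (hj * p) N₀ (by positivity) hN
  have hMi' : StrictMonoOn Fi (Set.Ioi 0) := by
    intro x hx y hy hxy
    rw [hFi x, hFi y]
    exact hMi hx hy hxy
  have hMj' : StrictMonoOn Fj (Set.Ioi 0) := by
    intro x hx y hy hxy
    rw [hFj x, hFj y]
    exact hMj hx hy hxy
  have h1 : Fi b ≥ c ↔ b ≥ bi := by
    rw [← hFbi]
    exact (hMi'.le_iff_le hbi hb)
  have h2 : Fj b ≥ c ↔ b ≥ bj := by
    rw [← hFbj]
    exact (hMj'.le_iff_le hbj hb)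
  simp only [h1, h2, ge_iff_le, max_le_iff]
end

section
/- For each group k ∈ {1, …, K}, let β_k(Θ) denote the unique positive solution of G_k(β) = Θ (which exists for every Θ > 0), and define S(Θ) = Σ_{k=1}^{K} max(L_k, β_k(Θ)). Then S is antitone in Θ on (0, ∞), and if Σ_{k=1}^{K} L_k < B, there exists a unique Θ* > 0 such that S(Θ*) = B. -/
noncomputable def FF (h p N₀ x : ℝ) : ℝ :=
  x * Real.logb 2 (1 + h * p / (2 * N₀ * x + h * p))

noncomputable def FF' (h p N₀ x : ℝ) : ℝ :=
  Real.logb 2 ((2 * N₀ * x + 2 * h * p) / (2 * N₀ * x + h * p)) -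
    (2 * N₀ * x * h * p) /
      (Real.log 2 * (2 * N₀ * x + 2 * h * p) * (2 * N₀ * x + h * p))

noncomputable def GG (h p N₀ Q x : ℝ) : ℝ := p * Q * FF' h p N₀ x / (FF h p N₀ x) ^ 2

variable {h p N₀ Q b : ℝ}

lemma FF_hasDerivAt (hh : 0 < h) (hp : 0 < p) (hN : 0 < N₀) (hb : 0 < b) :
    HasDerivAt (FF h p N₀) (FF' h p N₀ b) b := by
  have hlog2 : (0:ℝ) < Real.log 2 := Real.log_pos one_lt_two
  have h1 : 0 < 2 * N₀ * b + h * p := by positivity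
  have h2 : 0 < 2 * N₀ * b + 2 * h * p := by positivity
  have hU : IsOpen {x : ℝ | 0 < 2 * N₀ * x + h * p} :=
    isOpen_lt continuous_const (by continuity)
  have hbU : b ∈ {x : ℝ | 0 < 2 * N₀ * x + h * p} := h1
  have heq : FF h p N₀ =ᶠ[nhds b]
      (fun x => x * (Real.log (2 * N₀ * x + 2 * h * p) - Real.log (2 * N₀ * x + h * p))
        / Real.log 2) := by
    filter_upwards [hU.mem_nhds hbU] with x hx
    have hx1 : (0:ℝ) < 2 * N₀ * x + h * p := hx
    have hx2 : (0:ℝ) < 2 * N₀ * x + 2 * h * p := by linarith [mul_pos hh hp]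
    have e1 : 1 + h * p / (2 * N₀ * x + h * p)
        = (2 * N₀ * x + 2 * h * p) / (2 * N₀ * x + h * p) := by
      field_simp; ring
    rw [FF, e1, Real.logb, Real.log_div hx2.ne' hx1.ne']
    ring
  have hg2 : HasDerivAt (fun x : ℝ => Real.log (2 * N₀ * x + 2 * h * p))
      (2 * N₀ / (2 * N₀ * b + 2 * h * p)) b := by
    have := (((hasDerivAt_id b).const_mul (2 * N₀)).add_const (2 * h * p)).log h2.ne'
    simpa using this
  have hg1 : HasDerivAt (fun x : ℝ => Real.log (2 * N₀ * x + h * p))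
      (2 * N₀ / (2 * N₀ * b + h * p)) b := by
    have := (((hasDerivAt_id b).const_mul (2 * N₀)).add_const (h * p)).log h1.ne'
    simpa using this
  have hmain := ((hasDerivAt_id b).mul (hg2.sub hg1)).div_const (Real.log 2)
  have := hmain.congr_of_eventuallyEq heq
  convert this using 1
  · rfl
  · rfl
  rw [FF', Real.logb, Real.log_div h2.ne' h1.ne']
  simp only [Pi.sub_apply, id]
  field_simp
  ring

lemma FF'_hasDerivAt (hh : 0 < h) (hp : 0 < p) (hN : 0 < N₀) (hb : 0 < b) :
    HasDerivAt (FF' h p N₀)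
      (-(2 * N₀ * (h * p) ^ 2 * (3 * (2 * N₀) * b + 4 * (h * p))) /
        (Real.log 2 * ((2 * N₀ * b + 2 * h * p) * (2 * N₀ * b + h * p)) ^ 2)) b := by
  have hlog2 : (0:ℝ) < Real.log 2 := Real.log_pos one_lt_two
  have h1 : 0 < 2 * N₀ * b + h * p := by positivity
  have h2 : 0 < 2 * N₀ * b + 2 * h * p := by positivity
  have hU : IsOpen {x : ℝ | 0 < 2 * N₀ * x + h * p} :=
    isOpen_lt continuous_const (by continuity)
  have hbU : b ∈ {x : ℝ | 0 < 2 * N₀ * x + h * p} := h1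
  have heq : FF' h p N₀ =ᶠ[nhds b]
      (fun x => (Real.log (2 * N₀ * x + 2 * h * p) - Real.log (2 * N₀ * x + h * p))
          / Real.log 2 -
        (2 * N₀ * x * h * p) /
          (Real.log 2 * (2 * N₀ * x + 2 * h * p) * (2 * N₀ * x + h * p))) := by
    filter_upwards [hU.mem_nhds hbU] with x hx
    have hx1 : (0:ℝ) < 2 * N₀ * x + h * p := hx
    have hx2 : (0:ℝ) < 2 * N₀ * x + 2 * h * p := by linarith [mul_pos hh hp]
    rw [FF', Real.logb, Real.log_div hx2.ne' hx1.ne']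
  have hg2 : HasDerivAt (fun x : ℝ => Real.log (2 * N₀ * x + 2 * h * p))
      (2 * N₀ / (2 * N₀ * b + 2 * h * p)) b := by
    have := (((hasDerivAt_id b).const_mul (2 * N₀)).add_const (2 * h * p)).log h2.ne'
    simpa using this
  have hg1 : HasDerivAt (fun x : ℝ => Real.log (2 * N₀ * x + h * p))
      (2 * N₀ / (2 * N₀ * b + h * p)) b := by
    have := (((hasDerivAt_id b).const_mul (2 * N₀)).add_const (h * p)).log h1.ne'
    simpa using this
  have hnum : HasDerivAt (fun x : ℝ => 2 * N₀ * x * h * p) (2 * N₀ * h * p) b := by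
    have := (((hasDerivAt_id b).const_mul (2 * N₀)).mul_const h).mul_const p
    simpa using this
  have hd2 : HasDerivAt (fun x : ℝ => 2 * N₀ * x + 2 * h * p) (2 * N₀) b := by
    simpa using ((hasDerivAt_id b).const_mul (2 * N₀)).add_const (2 * h * p)
  have hd1 : HasDerivAt (fun x : ℝ => 2 * N₀ * x + h * p) (2 * N₀) b := by
    simpa using ((hasDerivAt_id b).const_mul (2 * N₀)).add_const (h * p)
  have hden : HasDerivAt
      (fun x : ℝ => Real.log 2 * (2 * N₀ * x + 2 * h * p) * (2 * N₀ * x + h * p))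
      ((Real.log 2 * (2 * N₀)) * (2 * N₀ * b + h * p) +
        Real.log 2 * (2 * N₀ * b + 2 * h * p) * (2 * N₀)) b :=
    (hd2.const_mul (Real.log 2)).mul hd1
  have hdenne : Real.log 2 * (2 * N₀ * b + 2 * h * p) * (2 * N₀ * b + h * p) ≠ 0 := by
    positivity
  have hmain := ((hg2.sub hg1).div_const (Real.log 2)).sub (hnum.div hden hdenne)
  have := hmain.congr_of_eventuallyEq heq
  convert this using 1
  · rfl
  · rfl
  field_simp
  ring

lemma FF_pos (hh : 0 < h) (hp : 0 < p) (hN : 0 < N₀) (hb : 0 < b) :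
    0 < FF h p N₀ b := by
  have h1 : 0 < 2 * N₀ * b + h * p := by positivity
  have : (0:ℝ) < h * p / (2 * N₀ * b + h * p) := by positivity
  exact mul_pos hb (Real.logb_pos one_lt_two (by linarith))

lemma FF'_pos (hh : 0 < h) (hp : 0 < p) (hN : 0 < N₀) (hb : 0 < b) :
    0 < FF' h p N₀ b := by
  have hlog2 : (0:ℝ) < Real.log 2 := Real.log_pos one_lt_two
  have h1 : 0 < 2 * N₀ * b + h * p := by positivity
  have h2 : 0 < 2 * N₀ * b + 2 * h * p := by positivity
  have key : Real.log ((2 * N₀ * b + h * p) / (2 * N₀ * b + 2 * h * p)) <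
      (2 * N₀ * b + h * p) / (2 * N₀ * b + 2 * h * p) - 1 := by
    apply Real.log_lt_sub_one_of_pos (by positivity)
    intro hcon
    rw [div_eq_one_iff_eq h2.ne'] at hcon
    nlinarith [mul_pos hh hp]
  rw [Real.log_div h1.ne' h2.ne'] at key
  have h3 : h * p / (2 * N₀ * b + 2 * h * p) ≤
      Real.log (2 * N₀ * b + 2 * h * p) - Real.log (2 * N₀ * b + h * p) := by
    have e : h * p / (2 * N₀ * b + 2 * h * p)
        = 1 - (2 * N₀ * b + h * p) / (2 * N₀ * b + 2 * h * p) := by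
      field_simp
      ring
    rw [e]; linarith
  have h4 : h * p / (2 * N₀ * b + 2 * h * p) / Real.log 2 ≤
      (Real.log (2 * N₀ * b + 2 * h * p) - Real.log (2 * N₀ * b + h * p)) / Real.log 2 :=
    (div_le_div_iff_of_pos_right hlog2).mpr h3
  have hstep : 2 * N₀ * b * h * p /
        (Real.log 2 * (2 * N₀ * b + 2 * h * p) * (2 * N₀ * b + h * p)) +
      (h * p) ^ 2 / (Real.log 2 * (2 * N₀ * b + 2 * h * p) * (2 * N₀ * b + h * p)) =
      h * p / (2 * N₀ * b + 2 * h * p) / Real.log 2 := by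
    field_simp
  have hsq : 0 < (h * p) ^ 2 / (Real.log 2 * (2 * N₀ * b + 2 * h * p) * (2 * N₀ * b + h * p)) := by
    positivity
  rw [FF', Real.logb, Real.log_div h2.ne' h1.ne']
  linarith

lemma FF_mono (hh : 0 < h) (hp : 0 < p) (hN : 0 < N₀) :
    StrictMonoOn (FF h p N₀) (Set.Ioi 0) := by
  apply strictMonoOn_of_deriv_pos (convex_Ioi 0)
  · exact fun x hx => (FF_hasDerivAt hh hp hN hx).differentiableAt.continuousAt.continuousWithinAt
  · intro x hx
    rw [interior_Ioi] at hx
    rw [(FF_hasDerivAt hh hp hN hx).deriv]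
    exact FF'_pos hh hp hN hx

lemma FF'_anti (hh : 0 < h) (hp : 0 < p) (hN : 0 < N₀) :
    StrictAntiOn (FF' h p N₀) (Set.Ioi 0) := by
  apply strictAntiOn_of_deriv_neg (convex_Ioi 0)
  · exact fun x hx => (FF'_hasDerivAt hh hp hN hx).differentiableAt.continuousAt.continuousWithinAt
  · intro x hx
    rw [interior_Ioi] at hx
    rw [(FF'_hasDerivAt hh hp hN hx).deriv]
    have hx0 : (0:ℝ) < x := hx
    apply div_neg_of_neg_of_pos
    · have h5 : 0 < 3 * (2 * N₀) * x := by positivity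
      have h6 : 0 < 3 * (2 * N₀) * x + 4 * (h * p) := by nlinarith [mul_pos hh hp]
      have : 0 < 2 * N₀ * (h * p) ^ 2 * (3 * (2 * N₀) * x + 4 * (h * p)) := by
        apply mul_pos (by positivity) h6
      linarith
    · have hlog2 : (0:ℝ) < Real.log 2 := Real.log_pos one_lt_two
      have h1 : 0 < 2 * N₀ * x + h * p := by nlinarith [mul_pos hh hp]
      have h2 : 0 < 2 * N₀ * x + 2 * h * p := by nlinarith [mul_pos hh hp]
      exact mul_pos hlog2 (pow_pos (mul_pos h2 h1) 2)

lemma GG_pos (hh : 0 < h) (hp : 0 < p) (hN : 0 < N₀) (hQ : 0 < Q) (hb : 0 < b) :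
    0 < GG h p N₀ Q b := by
  have := FF_pos hh hp hN hb
  have := FF'_pos hh hp hN hb
  rw [GG]
  positivity

lemma GG_anti (hh : 0 < h) (hp : 0 < p) (hN : 0 < N₀) (hQ : 0 < Q) :
    StrictAntiOn (GG h p N₀ Q) (Set.Ioi 0) := by
  intro x hx y hy hxy
  have hx0 : (0:ℝ) < x := hx
  have hy0 : (0:ℝ) < y := hy
  have hFx := FF_pos hh hp hN hx0
  have hFy := FF_pos hh hp hN hy0
  have hF'y := FF'_pos hh hp hN hy0
  have hmono := FF_mono hh hp hN hx hy hxy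
  have hanti := FF'_anti hh hp hN hx hy hxy
  rw [GG, GG]
  have step1 : p * Q * FF' h p N₀ y / FF h p N₀ y ^ 2 ≤
      p * Q * FF' h p N₀ y / FF h p N₀ x ^ 2 := by
    gcongr
    all_goals first | positivity | exact hFx | linarith [hmono]
  have step2 : p * Q * FF' h p N₀ y / FF h p N₀ x ^ 2 <
      p * Q * FF' h p N₀ x / FF h p N₀ x ^ 2 := by
    gcongr
    all_goals first | positivity | linarith [hanti]
  linarith

/-- For each group `k`, let `β k Θ` be the unique positive solution of
`G_k(β) = Θ` (which exists for every `Θ > 0`), and set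
`S(Θ) = Σ_k max(L_k, β_k(Θ))`. Then `S` is antitone in `Θ` on `(0, ∞)`, and if
`Σ_k L_k < B`, there exists a unique `Θ* > 0` with `S(Θ*) = B`. -/
theorem stmt_17 (K : ℕ) (hK : 0 < K)
    (h p L : Fin K → ℝ) (Q N₀ B : ℝ)
    (hh : ∀ k, 0 < h k) (hp : ∀ k, 0 < p k) (hL : ∀ k, 0 < L k)
    (hQ : 0 < Q) (hN : 0 < N₀) (hB : 0 < B)
    (F F' G : Fin K → ℝ → ℝ)
    (hF : ∀ k (b : ℝ), F k b =
      b * Real.logb 2 (1 + h k * p k / (2 * N₀ * b + h k * p k)))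
    (hF' : ∀ k (b : ℝ), F' k b =
      Real.logb 2 ((2 * N₀ * b + 2 * h k * p k) / (2 * N₀ * b + h k * p k)) -
        (2 * N₀ * b * h k * p k) /
          (Real.log 2 * (2 * N₀ * b + 2 * h k * p k) * (2 * N₀ * b + h k * p k)))
    (hG : ∀ k (b : ℝ), G k b = p k * Q * F' k b / (F k b) ^ 2)
    (β : Fin K → ℝ → ℝ)
    (hβ : ∀ k (Θ : ℝ), 0 < Θ →
      (0 < β k Θ ∧ G k (β k Θ) = Θ ∧ ∀ b : ℝ, 0 < b → G k b = Θ → b = β k Θ))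
    (S : ℝ → ℝ)
    (hS : ∀ Θ : ℝ, S Θ = ∑ k : Fin K, max (L k) (β k Θ)) :
    (∀ Θ₁ Θ₂ : ℝ, 0 < Θ₁ → Θ₁ ≤ Θ₂ → S Θ₂ ≤ S Θ₁) ∧
    ((∑ k : Fin K, L k) < B → ∃! Θ : ℝ, 0 < Θ ∧ S Θ = B) := by
  -- Transfer properties of GG to G
  have hGeq : ∀ k (b : ℝ), G k b = GG (h k) (p k) N₀ Q b := by
    intro k b
    rw [hG, hF, hF']
    rfl
  have hGanti : ∀ k, StrictAntiOn (G k) (Set.Ioi 0) := by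
    intro k x hx y hy hxy
    rw [hGeq, hGeq]
    exact GG_anti (hh k) (hp k) hN hQ hx hy hxy
  have hGpos : ∀ k (b : ℝ), 0 < b → 0 < G k b := by
    intro k b hb
    rw [hGeq]
    exact GG_pos (hh k) (hp k) hN hQ hb
  -- basic facts about β
  have hβpos : ∀ k (Θ : ℝ), 0 < Θ → 0 < β k Θ := fun k Θ hΘ => (hβ k Θ hΘ).1
  have hβG : ∀ k (Θ : ℝ), 0 < Θ → G k (β k Θ) = Θ := fun k Θ hΘ => (hβ k Θ hΘ).2.1
  have hβinv : ∀ k (b : ℝ), 0 < b → β k (G k b) = b := by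
    intro k b hb
    exact ((hβ k (G k b) (hGpos k b hb)).2.2 b hb rfl).symm
  -- β is strictly antitone
  have hβanti : ∀ k (Θ₁ Θ₂ : ℝ), 0 < Θ₁ → Θ₁ < Θ₂ → β k Θ₂ < β k Θ₁ := by
    intro k Θ₁ Θ₂ h1 h12
    have h2 : 0 < Θ₂ := lt_trans h1 h12
    by_contra hcon
    push_neg at hcon
    rcases eq_or_lt_of_le hcon with heq | hlt
    · have hA := hβG k Θ₁ h1
      have hB2 := hβG k Θ₂ h2
      rw [← heq] at hB2
      rw [hA] at hB2
      linarith
    · have := hGanti k (Set.mem_Ioi.mpr (hβpos k Θ₁ h1)) (Set.mem_Ioi.mpr (hβpos k Θ₂ h2)) hlt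
      rw [hβG k Θ₁ h1, hβG k Θ₂ h2] at this
      linarith
  have hβmono : ∀ k (Θ₁ Θ₂ : ℝ), 0 < Θ₁ → Θ₁ ≤ Θ₂ → β k Θ₂ ≤ β k Θ₁ := by
    intro k Θ₁ Θ₂ h1 h12
    rcases eq_or_lt_of_le h12 with rfl | hlt
    · exact le_rfl
    · exact (hβanti k Θ₁ Θ₂ h1 hlt).le
  -- β is "upper bounded by" comparisons with G
  have hβlt : ∀ k (Θ b : ℝ), 0 < b → G k b < Θ → β k Θ < b := by
    intro k Θ b hb hGb
    have hΘ : 0 < Θ := lt_trans (hGpos k b hb) hGb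
    by_contra hcon
    push_neg at hcon
    rcases eq_or_lt_of_le hcon with heq | hlt
    · rw [heq, hβG k Θ hΘ] at hGb; linarith
    · have := hGanti k (Set.mem_Ioi.mpr hb) (Set.mem_Ioi.mpr (hβpos k Θ hΘ)) hlt
      rw [hβG k Θ hΘ] at this
      linarith
  have hβgt : ∀ k (Θ b : ℝ), 0 < b → 0 < Θ → Θ < G k b → b < β k Θ := by
    intro k Θ b hb hΘ hGb
    by_contra hcon
    push_neg at hcon
    rcases eq_or_lt_of_le hcon with heq | hlt
    · rw [← heq, hβG k Θ hΘ] at hGb; linarith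
    · have := hGanti k (Set.mem_Ioi.mpr (hβpos k Θ hΘ)) (Set.mem_Ioi.mpr hb) hlt
      rw [hβG k Θ hΘ] at this
      linarith
  -- continuity of β at each positive point
  have hβcont : ∀ k (Θ₀ : ℝ), 0 < Θ₀ → ContinuousAt (β k) Θ₀ := by
    intro k Θ₀ hΘ₀
    rw [Metric.continuousAt_iff]
    intro ε hε
    set b₀ := β k Θ₀ with hb₀
    have hb₀pos : 0 < b₀ := hβpos k Θ₀ hΘ₀
    set bl : ℝ := b₀ - min (ε / 2) (b₀ / 2) with hbl
    set bu : ℝ := b₀ + ε / 2 with hbu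
    have hblpos : 0 < bl := by
      have : min (ε / 2) (b₀ / 2) ≤ b₀ / 2 := min_le_right _ _
      simp only [hbl]; linarith
    have hbllt : bl < b₀ := by
      have : 0 < min (ε / 2) (b₀ / 2) := lt_min (by linarith) (by linarith)
      simp only [hbl]; linarith
    have hbult : b₀ < bu := by simp only [hbu]; linarith
    have hbupos : 0 < bu := lt_trans hb₀pos hbult
    have hGu : G k bu < Θ₀ := by
      have := hGanti k (Set.mem_Ioi.mpr hb₀pos) (Set.mem_Ioi.mpr hbupos) hbult
      rwa [hβG k Θ₀ hΘ₀] at this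
    have hGl : Θ₀ < G k bl := by
      have := hGanti k (Set.mem_Ioi.mpr hblpos) (Set.mem_Ioi.mpr hb₀pos) hbllt
      rwa [hβG k Θ₀ hΘ₀] at this
    refine ⟨min (Θ₀ - G k bu) (G k bl - Θ₀), lt_min (by linarith) (by linarith), ?_⟩
    intro Θ hΘdist
    rw [Real.dist_eq] at hΘdist ⊢
    have h1 : |Θ - Θ₀| < Θ₀ - G k bu := lt_of_lt_of_le hΘdist (min_le_left _ _)
    have h2 : |Θ - Θ₀| < G k bl - Θ₀ := lt_of_lt_of_le hΘdist (min_le_right _ _)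
    rw [abs_lt] at h1 h2
    have hGuΘ : G k bu < Θ := by linarith
    have hΘGl : Θ < G k bl := by linarith
    have hub : β k Θ < bu := hβlt k Θ bu hbupos hGuΘ
    have hΘpos : 0 < Θ := lt_trans (hGpos k bu hbupos) hGuΘ
    have hlb : bl < β k Θ := hβgt k Θ bl hblpos hΘpos hΘGl
    rw [abs_lt]
    constructor
    · have : min (ε / 2) (b₀ / 2) ≤ ε / 2 := min_le_left _ _
      simp only [hbl] at hlb
      linarith
    · simp only [hbu] at hub
      linarith
  -- rewrite S
  have hSfun : S = fun Θ => ∑ k : Fin K, max (L k) (β k Θ) := funext hS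
  subst hSfun
  -- antitone part
  have hSanti : ∀ Θ₁ Θ₂ : ℝ, 0 < Θ₁ → Θ₁ ≤ Θ₂ →
      (∑ k : Fin K, max (L k) (β k Θ₂)) ≤ ∑ k : Fin K, max (L k) (β k Θ₁) := by
    intro Θ₁ Θ₂ h1 h12
    apply Finset.sum_le_sum
    intro k _
    exact max_le_max le_rfl (hβmono k Θ₁ Θ₂ h1 h12)
  refine ⟨hSanti, ?_⟩
  intro hsum
  -- existence
  have hne : (Finset.univ : Finset (Fin K)).Nonempty := ⟨⟨0, hK⟩, Finset.mem_univ _⟩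
  set Θhi : ℝ := Finset.univ.sup' hne (fun k => G k (L k)) with hΘhi
  have hΘhi_pos : 0 < Θhi := by
    obtain ⟨k, _, hk⟩ := Finset.exists_mem_eq_sup' hne (fun k => G k (L k))
    rw [hΘhi, hk]
    exact hGpos k (L k) (hL k)
  have hShi : (∑ k : Fin K, max (L k) (β k Θhi)) = ∑ k : Fin K, L k := by
    apply Finset.sum_congr rfl
    intro k _
    have hle : G k (L k) ≤ Θhi := by
      rw [hΘhi]
      exact Finset.le_sup' (fun k => G k (L k)) (Finset.mem_univ k)
    have : β k Θhi ≤ L k := by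
      rcases eq_or_lt_of_le hle with heq | hlt
      · rw [← heq, hβinv k (L k) (hL k)]
      · exact (hβlt k Θhi (L k) (hL k) hlt).le
    exact max_eq_left this
  set k₀ : Fin K := ⟨0, hK⟩ with hk₀
  set Θlo : ℝ := G k₀ B with hΘlo
  have hΘlo_pos : 0 < Θlo := hGpos k₀ B hB
  have hSlo : B ≤ ∑ k : Fin K, max (L k) (β k Θlo) := by
    have hβB : β k₀ Θlo = B := hβinv k₀ B hB
    have h1 : B ≤ max (L k₀) (β k₀ Θlo) := by rw [hβB]; exact le_max_right _ _
    refine le_trans h1 (Finset.single_le_sum (f := fun k => max (L k) (β k Θlo))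
      (fun k _ => le_trans (hL k).le (le_max_left _ _)) (Finset.mem_univ k₀))
  have hlohi : Θlo ≤ Θhi := by
    by_contra hcon
    push_neg at hcon
    have := hSanti Θhi Θlo hΘhi_pos hcon.le
    rw [hShi] at this
    linarith
  have hScont : ContinuousOn (fun Θ => ∑ k : Fin K, max (L k) (β k Θ))
      (Set.Icc Θlo Θhi) := by
    intro Θ hΘ
    have hΘpos : 0 < Θ := lt_of_lt_of_le hΘlo_pos hΘ.1
    apply ContinuousAt.continuousWithinAt
    exact tendsto_finset_sum _
      (fun k _ => continuousAt_const.max (hβcont k Θ hΘpos))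
  have hmem : B ∈ Set.Icc ((fun Θ => ∑ k : Fin K, max (L k) (β k Θ)) Θhi)
      ((fun Θ => ∑ k : Fin K, max (L k) (β k Θ)) Θlo) := by
    simp only [Set.mem_Icc]
    exact ⟨by rw [hShi]; exact hsum.le, hSlo⟩
  obtain ⟨Θs, hΘsmem, hΘsB⟩ := intermediate_value_Icc' hlohi hScont hmem
  have hΘspos : 0 < Θs := lt_of_lt_of_le hΘlo_pos hΘsmem.1
  -- uniqueness
  have key : ∀ Θ₁ Θ₂ : ℝ, 0 < Θ₁ → Θ₁ < Θ₂ →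
      (∑ k : Fin K, max (L k) (β k Θ₁)) = B →
      (∑ k : Fin K, max (L k) (β k Θ₂)) = B → False := by
    intro Θ₁ Θ₂ h1 h12 hB1 hB2
    have h2 : 0 < Θ₂ := lt_trans h1 h12
    have hex : ∃ k, L k < β k Θ₂ := by
      by_contra hcon
      push_neg at hcon
      have heq : (∑ k : Fin K, max (L k) (β k Θ₂)) = ∑ k : Fin K, L k :=
        Finset.sum_congr rfl (fun k _ => max_eq_left (hcon k))
      rw [hB2] at heq
      linarith
    obtain ⟨k, hk⟩ := hex
    have hlt : max (L k) (β k Θ₂) < max (L k) (β k Θ₁) := by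
      have hb : β k Θ₂ < β k Θ₁ := hβanti k Θ₁ Θ₂ h1 h12
      rw [max_eq_right hk.le]
      exact lt_of_lt_of_le hb (le_max_right _ _)
    have hslt : (∑ k : Fin K, max (L k) (β k Θ₂)) < ∑ k : Fin K, max (L k) (β k Θ₁) :=
      Finset.sum_lt_sum
        (fun i _ => max_le_max le_rfl (hβmono i Θ₁ Θ₂ h1 h12.le))
        ⟨k, Finset.mem_univ k, hlt⟩
    rw [hB1, hB2] at hslt
    exact lt_irrefl B hslt
  refine ⟨Θs, ⟨hΘspos, hΘsB⟩, ?_⟩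
  rintro y ⟨hy, hSy⟩
  rcases lt_trichotomy y Θs with hc | hc | hc
  · exact absurd (key y Θs hy hc hSy hΘsB) id
  · exact hc
  · exact absurd (key Θs y hΘspos hc hΘsB hSy) id
end
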